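/- arXiv:2504.06693 — 9 statements merged into one kernel-verified Lean document; each statement's English description precedes it below -/
import Mathlib

section
/- Let X be a Riesz space (a real vector space with a lattice order compatible with the linear structure) and let E be a linear subspace of X. Then the following are equivalent: (1) E fails phase retrieval, i.e., there exist f, g ∈ E with |f| = |g| but f ≠ g and f ≠ −g; (2) there exist nonzero f, g ∈ E with |f| ⊓ |g| = 0. -/
section Aux

variable {Y : Type*} [Lattice Y] [AddCommGroup Y]
  [CovariantClass Y Y (· + ·) (· ≤ ·)]

private lemma aux_sup (a b : Y) : |a + b| ⊔ |a - b| = |a| + |b| := by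
  have h1 : |a + b| = (a + b) ⊔ (-a - b) := by
    rw [abs]; congr 1; abel
  have h2 : |a - b| = (a - b) ⊔ (-a + b) := by
    rw [abs]; congr 1; abel
  calc |a + b| ⊔ |a - b|
      = ((a + b) ⊔ (a - b)) ⊔ ((-a + b) ⊔ (-a - b)) := by
        rw [h1, h2, sup_sup_sup_comm, sup_comm (-a - b) (-a + b)]
    _ = (a + (b ⊔ -b)) ⊔ (-a + (b ⊔ -b)) := by
        rw [add_sup, add_sup]; congr 2 <;> abel
    _ = (a ⊔ -a) + (b ⊔ -b) := by rw [sup_add]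
    _ = |a| + |b| := rfl

private lemma aux_inf (a b : Y) : |a + b| ⊓ |a - b| = |(|a| - |b|)| := by
  letI : DistribLattice Y := AddCommGroup.toDistribLattice Y
  have hib : ∀ x : Y, x ⊓ -x = -|x| := fun x => by
    rw [abs, neg_sup, neg_neg, inf_comm]
  have h1 : |a + b| = (a + b) ⊔ (-a - b) := by
    rw [abs]; congr 1; abel
  have h2 : |a - b| = (a - b) ⊔ (-a + b) := by
    rw [abs]; congr 1; abel
  have t1 : (a + b) ⊓ (a - b) = a - |b| := by
    have : (a + b) ⊓ (a - b) = a + (b ⊓ -b) := by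
      rw [add_inf]; congr 1; abel
    rw [this, hib, sub_eq_add_neg]
  have t2 : (a + b) ⊓ (-a + b) = b - |a| := by
    have : (a + b) ⊓ (-a + b) = b + (a ⊓ -a) := by
      rw [add_inf]; congr 1 <;> abel
    rw [this, hib, sub_eq_add_neg]
  have t3 : (-a - b) ⊓ (a - b) = -b - |a| := by
    have : (-a - b) ⊓ (a - b) = -b + (a ⊓ -a) := by
      rw [add_inf, inf_comm]; congr 1 <;> abel
    rw [this, hib, sub_eq_add_neg]
  have t4 : (-a - b) ⊓ (-a + b) = -a - |b| := by
    have : (-a - b) ⊓ (-a + b) = -a + (b ⊓ -b) := by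
      rw [add_inf, inf_comm]; congr 1 <;> abel
    rw [this, hib, sub_eq_add_neg]
  calc |a + b| ⊓ |a - b|
      = ((a + b) ⊓ (a - b) ⊔ (a + b) ⊓ (-a + b)) ⊔
        ((-a - b) ⊓ (a - b) ⊔ (-a - b) ⊓ (-a + b)) := by
        rw [h1, h2, inf_sup_left, inf_sup_right, inf_sup_right]; ac_rfl
    _ = ((a - |b|) ⊔ (-a - |b|)) ⊔ ((b - |a|) ⊔ (-b - |a|)) := by
        rw [t1, t2, t3, t4]; ac_rfl
    _ = ((a ⊔ -a) - |b|) ⊔ ((b ⊔ -b) - |a|) := by rw [sup_sub, sup_sub]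
    _ = (|a| - |b|) ⊔ (|b| - |a|) := rfl
    _ = |(|a| - |b|)| := by
        show _ = (|a| - |b|) ⊔ -(|a| - |b|)
        rw [neg_sub]

end Aux

/-- In a Riesz space `X`, a linear subspace `E` fails phase retrieval (there are
`f, g ∈ E` with `|f| = |g|` but `f ≠ g` and `f ≠ -g`) if and only if
`E` contains two nonzero disjoint elements. -/
theorem fails_phase_retrieval_iff_disjoint_pair
    (X : Type*) [Lattice X] [AddCommGroup X]
    [CovariantClass X X (· + ·) (· ≤ ·)]
    [Module ℝ X] [PosSMulMono ℝ X]
    (E : Submodule ℝ X) :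
    (∃ f ∈ E, ∃ g ∈ E, |f| = |g| ∧ f ≠ g ∧ f ≠ -g) ↔
      (∃ f ∈ E, ∃ g ∈ E, f ≠ 0 ∧ g ≠ 0 ∧ |f| ⊓ |g| = 0) := by
  have two_ne : ∀ x : X, x + x = 0 → x = 0 := by
    intro x hx
    have : (2 : ℝ) • x = 0 := by rw [two_smul]; exact hx
    have := smul_eq_zero.mp this
    simpa using this
  constructor
  · rintro ⟨f, hf, g, hg, habs, hne1, hne2⟩
    refine ⟨f + g, E.add_mem hf hg, f - g, E.sub_mem hf hg, ?_, sub_ne_zero.mpr hne1, ?_⟩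
    · intro h
      exact hne2 (eq_neg_of_add_eq_zero_left h)
    · rw [aux_inf, habs, sub_self, abs_zero]
  · rintro ⟨f, hf, g, hg, hf0, hg0, hdisj⟩
    refine ⟨f + g, E.add_mem hf hg, f - g, E.sub_mem hf hg, ?_, ?_, ?_⟩
    · have hsup : |f + g| ⊔ |f - g| = |f| + |g| := aux_sup f g
      have hinf : |f + g| ⊓ |f - g| = |f| + |g| := by
        rw [aux_inf]
        have habsd : |(|f| - |g|)| = |f| ⊔ |g| - |f| ⊓ |g| := by
          rw [abs_sub_comm, ← sup_sub_inf_eq_abs_sub]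
        rw [habsd, hdisj, sub_zero, ← inf_add_sup, hdisj, zero_add]
      have h1 : |f + g| ⊓ |f - g| = |f + g| ⊔ |f - g| := by rw [hinf, hsup]
      exact le_antisymm (le_sup_left.trans (h1.ge.trans inf_le_right))
        (le_sup_right.trans (h1.ge.trans inf_le_left))
    · intro h
      apply hg0
      apply two_ne
      calc g + g = (f + g) - (f - g) := by abel
        _ = 0 := sub_eq_zero.mpr h
    · intro h
      apply hf0
      apply two_ne
      calc f + f = (f + g) + (f - g) := by abel
        _ = 0 := by rw [h]; abel
end

section
/- Let K be a compact Hausdorff topological space and let E be a linear subspace of C(K; ℝ), the space of real-valued continuous functions on K. Then the following are equivalent: (1) E fails phase retrieval, i.e., there exist f, g ∈ E with |f(t)| = |g(t)| for all t ∈ K but f ≠ g and f ≠ −g; (2) there exist nonzero f, g ∈ E with min(|f(t)|, |g(t)|) = 0 for all t ∈ K; (3) there exist nonzero f, g ∈ E with f(t)·g(t) = 0 for all t ∈ K. -/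
/-- For a linear subspace `E` of `C(K; ℝ)` (`K` compact Hausdorff), the following
are equivalent: (1) `E` fails phase retrieval; (2) `E` contains two nonzero
functions with pointwise disjoint moduli; (3) `E` contains two nonzero functions
whose pointwise product vanishes. -/
theorem fails_phase_retrieval_tfae_continuousMap
    (K : Type*) [TopologicalSpace K] [CompactSpace K] [T2Space K]
    (E : Submodule ℝ C(K, ℝ)) :
    List.TFAE
      [ ∃ f ∈ E, ∃ g ∈ E, (∀ t, |f t| = |g t|) ∧ f ≠ g ∧ f ≠ -g,
        ∃ f ∈ E, ∃ g ∈ E, f ≠ 0 ∧ g ≠ 0 ∧ ∀ t, min |f t| |g t| = 0,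
        ∃ f ∈ E, ∃ g ∈ E, f ≠ 0 ∧ g ≠ 0 ∧ ∀ t, f t * g t = 0 ] := by
  tfae_have 1 → 3
  · rintro ⟨f, hf, g, hg, habs, hfg, hfng⟩
    refine ⟨f + g, E.add_mem hf hg, f - g, E.sub_mem hf hg, ?_, ?_, ?_⟩
    · intro h
      apply hfng
      ext t
      have := congrFun (congrArg DFunLike.coe h) t
      simp only [ContinuousMap.add_apply, ContinuousMap.zero_apply] at this
      simp only [ContinuousMap.neg_apply]
      linarith
    · intro h
      apply hfg
      ext t
      have := congrFun (congrArg DFunLike.coe h) t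
      simp only [ContinuousMap.sub_apply, ContinuousMap.zero_apply] at this
      linarith
    · intro t
      have h : f t ^ 2 = g t ^ 2 := by
        rw [← sq_abs (f t), habs t, sq_abs]
      simp only [ContinuousMap.add_apply, ContinuousMap.sub_apply]
      linear_combination h
  tfae_have 3 → 2
  · rintro ⟨f, hf, g, hg, hf0, hg0, h⟩
    refine ⟨f, hf, g, hg, hf0, hg0, fun t => ?_⟩
    rcases mul_eq_zero.mp (h t) with h' | h' <;> simp [h', abs_nonneg]
  tfae_have 2 → 3
  · rintro ⟨f, hf, g, hg, hf0, hg0, h⟩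
    refine ⟨f, hf, g, hg, hf0, hg0, fun t => ?_⟩
    rcases min_eq_iff.mp (h t) with ⟨h', _⟩ | ⟨h', _⟩
    · rw [abs_eq_zero.mp h', zero_mul]
    · rw [abs_eq_zero.mp h', mul_zero]
  tfae_have 3 → 1
  · rintro ⟨f, hf, g, hg, hf0, hg0, h⟩
    refine ⟨f + g, E.add_mem hf hg, f - g, E.sub_mem hf hg, ?_, ?_, ?_⟩
    · intro t
      have hsq : (f t + g t) ^ 2 = (f t - g t) ^ 2 := by linear_combination 4 * h t
      have := (sq_eq_sq_iff_abs_eq_abs (a := f t + g t) (b := f t - g t)).mp hsq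
      simpa using this
    · intro h'
      apply hg0
      ext t
      have := congrFun (congrArg DFunLike.coe h') t
      simp only [ContinuousMap.add_apply, ContinuousMap.sub_apply] at this
      simp only [ContinuousMap.zero_apply]
      linarith
    · intro h'
      apply hf0
      ext t
      have := congrFun (congrArg DFunLike.coe h') t
      simp only [ContinuousMap.add_apply, ContinuousMap.neg_apply,
        ContinuousMap.sub_apply] at this
      simp only [ContinuousMap.zero_apply]
      linarith
  tfae_finish
end

section
/- Let K be a compact Hausdorff topological space and let E be a complex linear subspace of C(K; ℂ). Then the following are equivalent: (1) E fails phase retrieval, i.e., there exist f, g ∈ E with |f(t)| = |g(t)| for all t ∈ K such that f ≠ λg for every λ ∈ ℂ with |λ| = 1; (2) there exist ℂ-linearly independent f, g ∈ E with |f(t)−g(t)| = |f(t)+g(t)| for all t ∈ K; (3) there exist ℂ-linearly independent f, g ∈ E with Re(f(t)·conj(g(t))) = 0 for all t ∈ K; (4) there exist ℂ-linearly independent f, g ∈ E with |f(t)+g(t)|² = |f(t)|² + |g(t)|² for all t ∈ K. -/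
private lemma aux23 (a b : ℂ) :
    ‖a - b‖ = ‖a + b‖ ↔ (a * (starRingEnd ℂ) b).re = 0 := by
  rw [Complex.norm_def, Complex.norm_def,
    Real.sqrt_inj (Complex.normSq_nonneg _) (Complex.normSq_nonneg _),
    Complex.normSq_sub, Complex.normSq_add]
  constructor <;> intro h <;> linarith

private lemma aux34 (a b : ℂ) :
    (a * (starRingEnd ℂ) b).re = 0 ↔
      ‖a + b‖ ^ 2 = ‖a‖ ^ 2 + ‖b‖ ^ 2 := by
  rw [Complex.sq_norm, Complex.sq_norm, Complex.sq_norm, Complex.normSq_add]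
  constructor <;> intro h <;> linarith

private lemma auxRe (a b : ℂ) (h : ‖a‖ = ‖b‖) :
    ((a + b) * (starRingEnd ℂ) (a - b)).re = 0 := by
  have h2 : Complex.normSq a = Complex.normSq b := by
    rw [← Complex.sq_norm, ← Complex.sq_norm, h]
  rw [Complex.normSq_apply, Complex.normSq_apply] at h2
  simp [Complex.mul_re, Complex.add_re, Complex.add_im, Complex.sub_re, Complex.sub_im,
    Complex.conj_re, Complex.conj_im]
  nlinarith [h2]

/-- Characterization of failure of complex phase retrieval for subspaces of
`C(K; ℂ)`, `K` compact Hausdorff. -/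
theorem fails_complex_phase_retrieval_tfae
    (K : Type*) [TopologicalSpace K] [CompactSpace K] [T2Space K]
    (E : Submodule ℂ C(K, ℂ)) :
    List.TFAE
      [ ∃ f ∈ E, ∃ g ∈ E, (∀ t, ‖f t‖ = ‖g t‖) ∧
          ∀ c : ℂ, ‖c‖ = 1 → f ≠ c • g,
        ∃ f ∈ E, ∃ g ∈ E, LinearIndependent ℂ ![f, g] ∧
          ∀ t, ‖f t - g t‖ = ‖f t + g t‖,
        ∃ f ∈ E, ∃ g ∈ E, LinearIndependent ℂ ![f, g] ∧
          ∀ t, (f t * (starRingEnd ℂ) (g t)).re = 0,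
        ∃ f ∈ E, ∃ g ∈ E, LinearIndependent ℂ ![f, g] ∧
          ∀ t, ‖f t + g t‖ ^ 2 =
            ‖f t‖ ^ 2 + ‖g t‖ ^ 2 ] := by
  tfae_have 2 ↔ 3 := by
    constructor
    · rintro ⟨f, hf, g, hg, hli, h⟩
      exact ⟨f, hf, g, hg, hli, fun t => (aux23 _ _).mp (h t)⟩
    · rintro ⟨f, hf, g, hg, hli, h⟩
      exact ⟨f, hf, g, hg, hli, fun t => (aux23 _ _).mpr (h t)⟩
  tfae_have 3 ↔ 4 := by
    constructor
    · rintro ⟨f, hf, g, hg, hli, h⟩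
      exact ⟨f, hf, g, hg, hli, fun t => (aux34 _ _).mp (h t)⟩
    · rintro ⟨f, hf, g, hg, hli, h⟩
      exact ⟨f, hf, g, hg, hli, fun t => (aux34 _ _).mpr (h t)⟩
  tfae_have 3 → 1 := by
    rintro ⟨f, hfE, g, hgE, hli, hre⟩
    refine ⟨f + g, E.add_mem hfE hgE, f - g, E.sub_mem hfE hgE, ?_, ?_⟩
    · intro t
      have := (aux23 (f t) (g t)).mpr (hre t)
      simpa using this.symm
    · intro c hc hEq
      rw [LinearIndependent.pair_iff] at hli
      have key : (1 - c) • f + (1 + c) • g = 0 := by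
        ext x
        have h := ContinuousMap.congr_fun hEq x
        simp at h ⊢
        linear_combination h
      obtain ⟨h1, h2⟩ := hli (1 - c) (1 + c) key
      have h20 : (2 : ℂ) = 0 := by linear_combination h1 + h2
      norm_num at h20
  tfae_have 1 → 3 := by
    rintro ⟨f, hfE, g, hgE, habs, hne⟩
    have hg0 : g ≠ 0 := by
      rintro rfl
      have hf0 : f = 0 := by
        ext t
        have := habs t
        simpa using this
      exact hne 1 (by simp) (by simp [hf0])
    obtain ⟨t0, ht0⟩ : ∃ t, g t ≠ 0 := by
      by_contra h
      push_neg at h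
      exact hg0 (ContinuousMap.ext h)
    refine ⟨f + g, E.add_mem hfE hgE, f - g, E.sub_mem hfE hgE, ?_, ?_⟩
    · rw [LinearIndependent.pair_iff]
      intro s t hst
      have key : (s + t) • f + (s - t) • g = 0 := by
        ext x
        have h := ContinuousMap.congr_fun hst x
        simp at h ⊢
        linear_combination h
      by_cases hspt : s + t = 0
      · have hkey2 : (s - t) • g = 0 := by
          rw [hspt] at key; simpa using key
        rcases smul_eq_zero.mp hkey2 with hst0 | hg
        · exact ⟨by linear_combination (hspt + hst0) / 2, by linear_combination (hspt - hst0) / 2⟩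
        · exact absurd hg hg0
      · exfalso
        set μ : ℂ := (t - s) / (s + t) with hμ
        have hfμ : f = μ • g := by
          ext x
          have h := ContinuousMap.congr_fun key x
          simp at h ⊢
          rw [hμ, div_mul_eq_mul_div, eq_div_iff hspt]
          linear_combination h
        have hμ1 : ‖μ‖ = 1 := by
          have h1 := habs t0
          rw [hfμ] at h1
          simp only [ContinuousMap.smul_apply, smul_eq_mul, map_mul, norm_mul] at h1
          have habsg : ‖g t0‖ ≠ 0 := by simpa using ht0
          have h2 : ‖μ‖ * ‖g t0‖ = 1 * ‖g t0‖ := by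
            rw [one_mul]; exact h1
          exact mul_right_cancel₀ habsg h2
        exact hne μ hμ1 hfμ
    · intro t
      have := auxRe (f t) (g t) (habs t)
      simpa using this
  tfae_finish
end

section
/- Let X be a real Banach lattice and let f, g ∈ X be linearly independent. Let Y = span{f, g} and suppose Y carries a real inner product ⟨·,·⟩ whose induced norm ‖y‖_H = √⟨y,y⟩ satisfies ‖y‖ ≤ ‖y‖_H ≤ K‖y‖ for all y ∈ Y, where 1 ≤ K ≤ √2. Then there exist f', g' ∈ Y such that: min(‖f−g‖, ‖f+g‖) ≤ K·min(‖f'−g'‖, ‖f'+g'‖); (‖f'‖² + ‖g'‖²)^{1/2} ≤ K·min(‖f'−g'‖, ‖f'+g'‖); and | |f'| − |g'| | ≤ | |f| − |g| | in the lattice order of X. -/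
section AuxLemmas

variable {X : Type*} [NormedAddCommGroup X] [Lattice X] [HasSolidNorm X] [IsOrderedAddMonoid X]
    [NormedSpace ℝ X] [PosSMulStrictMono ℝ X] [PosSMulReflectLT ℝ X]

/-- In a lattice-ordered group, `|a - b| ⊓ |a + b| ≤ ||a| - |b||`. -/
lemma inf_abs_sub_abs_add_le (a b : X) : |a - b| ⊓ |a + b| ≤ |(|a| - |b|)| := by
  letI : DistribLattice X := AddCommGroup.toDistribLattice X
  have hba : |b| - |a| ≤ |(|a| - |b|)| := by
    rw [abs_sub_comm]; exact le_abs_self _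
  have hab : |a| - |b| ≤ |(|a| - |b|)| := le_abs_self _
  have h1 : (a - b) ⊓ (a + b) ≤ |(|a| - |b|)| := by
    have : (a - b) ⊓ (a + b) = a + ((-b) ⊓ b) := by
      rw [add_inf]; rw [sub_eq_add_neg]
    rw [this]
    have : (-b) ⊓ b = -|b| := by
      rw [abs, neg_sup, neg_neg, inf_comm]
    rw [this]
    calc a + -|b| ≤ |a| + -|b| := by
          exact add_le_add_left (le_abs_self a) _
      _ = |a| - |b| := by rw [sub_eq_add_neg]
      _ ≤ _ := hab
  have h2 : (a - b) ⊓ (-(a + b)) ≤ |(|a| - |b|)| := by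
    have : (a - b) ⊓ (-(a + b)) = -b + (a ⊓ (-a)) := by
      rw [add_inf]; congr 1 <;> abel
    rw [this]
    have : a ⊓ (-a) = -|a| := by rw [abs, neg_sup, neg_neg]; exact inf_comm _ _
    rw [this]
    calc -b + -|a| ≤ |b| + -|a| := add_le_add_left (neg_le_abs b) _
      _ = |b| - |a| := by rw [sub_eq_add_neg]
      _ ≤ _ := hba
  have h3 : (b - a) ⊓ (a + b) ≤ |(|a| - |b|)| := by
    have : (b - a) ⊓ (a + b) = b + ((-a) ⊓ a) := by
      rw [add_inf]; congr 1 <;> abel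
    rw [this]
    have : (-a) ⊓ a = -|a| := by rw [abs, neg_sup, neg_neg, inf_comm]
    rw [this]
    calc b + -|a| ≤ |b| + -|a| := add_le_add_left (le_abs_self b) _
      _ = |b| - |a| := by rw [sub_eq_add_neg]
      _ ≤ _ := hba
  have h4 : (b - a) ⊓ (-(a + b)) ≤ |(|a| - |b|)| := by
    have : (b - a) ⊓ (-(a + b)) = -a + (b ⊓ (-b)) := by
      rw [add_inf]; congr 1 <;> abel
    rw [this]
    have : b ⊓ (-b) = -|b| := by rw [abs, neg_sup, neg_neg]; exact inf_comm _ _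
    rw [this]
    calc -a + -|b| ≤ |a| + -|b| := add_le_add_left (neg_le_abs a) _
      _ = |a| - |b| := by rw [sub_eq_add_neg]
      _ ≤ _ := hab
  have e1 : |a - b| = (a - b) ⊔ (b - a) := by rw [abs, neg_sub]
  have e2 : |a + b| = (a + b) ⊔ (-(a + b)) := rfl
  rw [e1, e2, inf_sup_right, inf_sup_left, inf_sup_left]
  exact sup_le (sup_le h1 h2) (sup_le h3 h4)

/-- For `0 ≤ c ≤ 1`, `|c • u| ≤ |u|`. -/
lemma abs_smul_le_abs {c : ℝ} (hc0 : 0 ≤ c) (hc1 : c ≤ 1) (u : X) : |c • u| ≤ |u| := by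
  rw [abs_le']
  have hcu : c • |u| ≤ |u| := by
    have h := smul_nonneg (by linarith : (0:ℝ) ≤ 1 - c) (abs_nonneg u)
    rw [sub_smul, one_smul] at h
    exact sub_nonneg.mp h
  constructor
  · calc c • u ≤ c • |u| := smul_le_smul_of_nonneg_left (le_abs_self u) hc0
      _ ≤ |u| := hcu
  · calc -(c • u) = c • (-u) := by rw [smul_neg]
      _ ≤ c • |u| := smul_le_smul_of_nonneg_left (neg_le_abs u) hc0
      _ ≤ |u| := hcu

/-- The main construction: given `U V` in the subspace with `B V V ≤ B U U`, produce the
almost-orthogonal pair. -/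
lemma orthogonal_reduction_aux
    (Y : Submodule ℝ X)
    (B : Y →ₗ[ℝ] Y →ₗ[ℝ] ℝ)
    (hsym : ∀ x y, B x y = B y x) (hpos : ∀ y, 0 ≤ B y y)
    (K : ℝ) (hK1 : 1 ≤ K)
    (hlow : ∀ y : Y, ‖(y : X)‖ ≤ Real.sqrt (B y y))
    (hhigh : ∀ y : Y, Real.sqrt (B y y) ≤ K * ‖(y : X)‖)
    (U V : Y) (hU : (U : X) ≠ 0) (hUV : B V V ≤ B U U) :
    ∃ f' ∈ Y, ∃ g' ∈ Y,
      min ‖(U : X)‖ ‖(V : X)‖ ≤ K * min ‖f' - g'‖ ‖f' + g'‖ ∧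
      Real.sqrt (‖f'‖ ^ 2 + ‖g'‖ ^ 2) ≤ K * min ‖f' - g'‖ ‖f' + g'‖ ∧
      |(|f'| - |g'|)| ≤ |(U : X)| ⊓ |(V : X)| := by
  have hK0 : 0 < K := lt_of_lt_of_le one_pos hK1
  -- B U U is positive
  have hBU : 0 < B U U := by
    have h1 : 0 < ‖(U : X)‖ := norm_pos_iff.mpr hU
    have h2 := hlow U
    have h3 : 0 < Real.sqrt (B U U) := lt_of_lt_of_le h1 h2
    exact Real.sqrt_pos.mp h3
  set c : ℝ := Real.sqrt (B V V / B U U) with hc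
  have hc0 : 0 ≤ c := Real.sqrt_nonneg _
  have hc2 : c ^ 2 = B V V / B U U := Real.sq_sqrt (div_nonneg (hpos V) hBU.le)
  have hc1 : c ≤ 1 := by
    rw [hc]
    have : B V V / B U U ≤ 1 := (div_le_one hBU).mpr hUV
    calc Real.sqrt (B V V / B U U) ≤ Real.sqrt 1 := Real.sqrt_le_sqrt this
      _ = 1 := Real.sqrt_one
  set F' : Y := (2⁻¹ : ℝ) • (V + c • U) with hF'
  set G' : Y := (2⁻¹ : ℝ) • (V - c • U) with hG'
  have hdiff : F' - G' = c • U := by rw [hF', hG']; module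
  have hsumv : F' + G' = V := by rw [hF', hG']; module
  -- orthogonality
  have hBFG : B F' G' = 0 := by
    have expand : B F' G' = 4⁻¹ * (B V V - c ^ 2 * B U U) := by
      rw [hF', hG']
      simp only [map_add, map_sub, map_smul, LinearMap.add_apply, LinearMap.sub_apply,
        LinearMap.smul_apply, smul_eq_mul]
      rw [hsym U V]
      ring
    rw [expand, hc2]
    field_simp
    simp
  have hBsum : B F' F' + B G' G' = B V V := by
    have e1 : B (F' + G') (F' + G') = B F' F' + B G' G' + 2 * B F' G' := by
      simp only [map_add, LinearMap.add_apply]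
      rw [hsym G' F']
      ring
    rw [hsumv, hBFG] at e1
    linarith
  have hBdiff : B (F' - G') (F' - G') = B V V := by
    rw [hdiff]
    simp only [map_smul, LinearMap.smul_apply, smul_eq_mul]
    rw [show c * (c * B U U) = c ^ 2 * B U U by ring, hc2]
    field_simp
  -- coercions
  have hxd : (F' : X) - (G' : X) = c • (U : X) := by
    have := congrArg (Subtype.val : Y → X) hdiff
    simpa using this
  have hxs : (F' : X) + (G' : X) = (V : X) := by
    have := congrArg (Subtype.val : Y → X) hsumv
    simpa using this
  refine ⟨(F' : X), F'.2, (G' : X), G'.2, ?_, ?_, ?_⟩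
  · -- min ‖U‖ ‖V‖ ≤ K * min ...
    have key1 : Real.sqrt (B V V) ≤ K * ‖(F' : X) - (G' : X)‖ := by
      have := hhigh (F' - G')
      rw [hBdiff] at this
      calc Real.sqrt (B V V) ≤ K * ‖((F' - G' : Y) : X)‖ := this
        _ = K * ‖(F' : X) - (G' : X)‖ := by norm_cast
    have key2 : Real.sqrt (B V V) ≤ K * ‖(F' : X) + (G' : X)‖ := by
      rw [hxs]
      exact hhigh V
    calc min ‖(U : X)‖ ‖(V : X)‖ ≤ ‖(V : X)‖ := min_le_right _ _
      _ ≤ Real.sqrt (B V V) := hlow V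
      _ ≤ K * min ‖(F' : X) - (G' : X)‖ ‖(F' : X) + (G' : X)‖ := by
          rw [mul_min_of_nonneg _ _ hK0.le]
          exact le_min key1 key2
  · -- sqrt of sum of squares
    have hF2 : ‖(F' : X)‖ ^ 2 ≤ B F' F' := by
      have h := hlow F'
      calc ‖(F' : X)‖ ^ 2 ≤ Real.sqrt (B F' F') ^ 2 := by
            exact pow_le_pow_left₀ (norm_nonneg _) h 2
        _ = B F' F' := Real.sq_sqrt (hpos F')
    have hG2 : ‖(G' : X)‖ ^ 2 ≤ B G' G' := by
      have h := hlow G'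
      calc ‖(G' : X)‖ ^ 2 ≤ Real.sqrt (B G' G') ^ 2 := by
            exact pow_le_pow_left₀ (norm_nonneg _) h 2
        _ = B G' G' := Real.sq_sqrt (hpos G')
    have key1 : Real.sqrt (B V V) ≤ K * ‖(F' : X) - (G' : X)‖ := by
      have := hhigh (F' - G')
      rw [hBdiff] at this
      calc Real.sqrt (B V V) ≤ K * ‖((F' - G' : Y) : X)‖ := this
        _ = K * ‖(F' : X) - (G' : X)‖ := by norm_cast
    have key2 : Real.sqrt (B V V) ≤ K * ‖(F' : X) + (G' : X)‖ := by
      rw [hxs]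
      exact hhigh V
    calc Real.sqrt (‖(F' : X)‖ ^ 2 + ‖(G' : X)‖ ^ 2)
        ≤ Real.sqrt (B V V) := by
          apply Real.sqrt_le_sqrt
          rw [← hBsum]
          exact add_le_add hF2 hG2
      _ ≤ K * min ‖(F' : X) - (G' : X)‖ ‖(F' : X) + (G' : X)‖ := by
          rw [mul_min_of_nonneg _ _ hK0.le]
          exact le_min key1 key2
  · -- the lattice estimate
    have step1 : |(|(F' : X)| - |(G' : X)|)| ≤ |(F' : X) - (G' : X)| ⊓ |(F' : X) + (G' : X)| := by
      refine le_inf (abs_abs_sub_abs_le _ _) ?_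
      have := abs_abs_sub_abs_le (F' : X) (-(G' : X))
      rwa [abs_neg, sub_neg_eq_add] at this
    have step2 : |(F' : X) - (G' : X)| ⊓ |(F' : X) + (G' : X)| ≤ |(U : X)| ⊓ |(V : X)| := by
      rw [hxd, hxs]
      exact inf_le_inf_right _ (abs_smul_le_abs hc0 hc1 _)
    exact le_trans step1 step2

end AuxLemmas

/-- Orthogonal reduction (Freeman–Oikhberg–Pineau–Taylor, real case): if `f, g` are
linearly independent elements of a real Banach lattice `X` and `Y = span{f, g}`
carries an inner product `B` whose induced Hilbertian norm is `K`-equivalent to the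
ambient norm with `1 ≤ K ≤ √2`, then there are `f', g' ∈ Y` witnessing stable phase
retrieval on almost orthogonal vectors. -/
theorem orthogonal_reduction
    (X : Type*) [NormedAddCommGroup X] [Lattice X] [HasSolidNorm X] [IsOrderedAddMonoid X]
    [CompleteSpace X]
    [NormedSpace ℝ X] [PosSMulStrictMono ℝ X] [PosSMulReflectLT ℝ X]
    (f g : X) (hind : LinearIndependent ℝ ![f, g]) (K : ℝ)
    (hK1 : 1 ≤ K) (hK2 : K ≤ Real.sqrt 2)
    (B : ↥(Submodule.span ℝ ({f, g} : Set X)) →ₗ[ℝ]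
          ↥(Submodule.span ℝ ({f, g} : Set X)) →ₗ[ℝ] ℝ)
    (hsym : ∀ x y, B x y = B y x)
    (hpos : ∀ y, 0 ≤ B y y)
    (hlow : ∀ y : ↥(Submodule.span ℝ ({f, g} : Set X)), ‖(y : X)‖ ≤ Real.sqrt (B y y))
    (hhigh : ∀ y : ↥(Submodule.span ℝ ({f, g} : Set X)), Real.sqrt (B y y) ≤ K * ‖(y : X)‖) :
    ∃ f' ∈ Submodule.span ℝ ({f, g} : Set X), ∃ g' ∈ Submodule.span ℝ ({f, g} : Set X),
      min ‖f - g‖ ‖f + g‖ ≤ K * min ‖f' - g'‖ ‖f' + g'‖ ∧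
      Real.sqrt (‖f'‖ ^ 2 + ‖g'‖ ^ 2) ≤ K * min ‖f' - g'‖ ‖f' + g'‖ ∧
      |(|f'| - |g'|)| ≤ |(|f| - |g|)| := by
  have hf : f ∈ Submodule.span ℝ ({f, g} : Set X) := Submodule.subset_span (by simp)
  have hg : g ∈ Submodule.span ℝ ({f, g} : Set X) := Submodule.subset_span (by simp)
  let Y := Submodule.span ℝ ({f, g} : Set X)
  set F : Y := ⟨f, hf⟩ with hF
  set G : Y := ⟨g, hg⟩ with hG
  set U : Y := F - G with hU
  set V : Y := F + G with hV
  have hu : (U : X) = f - g := rfl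
  have hv : (V : X) = f + g := rfl
  have hpair := LinearIndependent.pair_iff.mp hind
  have hu0 : (U : X) ≠ 0 := by
    rw [hu]
    intro h
    have : (1 : ℝ) • f + (-1 : ℝ) • g = 0 := by
      simp only [one_smul, neg_one_smul]
      rw [← sub_eq_add_neg]
      exact h
    exact one_ne_zero (hpair 1 (-1) this).1
  have hv0 : (V : X) ≠ 0 := by
    rw [hv]
    intro h
    have : (1 : ℝ) • f + (1 : ℝ) • g = 0 := by simpa using h
    exact one_ne_zero (hpair 1 1 this).1
  have hkey : |f - g| ⊓ |f + g| ≤ |(|f| - |g|)| := inf_abs_sub_abs_add_le f g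
  rcases le_total (B V V) (B U U) with hc | hc
  · obtain ⟨f', hf', g', hg', h1, h2, h3⟩ :=
      orthogonal_reduction_aux (Submodule.span ℝ ({f, g} : Set X)) B hsym hpos K hK1 hlow hhigh U V hu0 hc
    refine ⟨f', hf', g', hg', ?_, h2, ?_⟩
    · rw [hu, hv] at h1; exact h1
    · rw [hu, hv] at h3
      exact le_trans h3 hkey
  · obtain ⟨f', hf', g', hg', h1, h2, h3⟩ :=
      orthogonal_reduction_aux (Submodule.span ℝ ({f, g} : Set X)) B hsym hpos K hK1 hlow hhigh V U hv0 hc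
    refine ⟨f', hf', g', hg', ?_, h2, ?_⟩
    · rw [hu, hv] at h1
      rw [min_comm] at h1
      exact h1
    · rw [hu, hv] at h3
      rw [inf_comm] at h3
      exact le_trans h3 hkey
end

section
/- Let K be a compact Hausdorff topological space, E a complex linear subspace of C(K; ℂ), and ε > 0. If there exist u, v ∈ E with ‖u‖∞ = ‖v‖∞ = 1 and ‖ t ↦ min(|u(t)|, |v(t)|) ‖∞ < ε, then E fails stable phase retrieval with constant 1/(√2·ε): there exist f, g ∈ E with inf{‖f − λg‖∞ : λ ∈ ℂ, |λ| = 1} > (1/(√2·ε))·‖ t ↦ |f(t)| − |g(t)| ‖∞. -/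
/-- The continuous function `t ↦ min (|u t|, |v t|)` for `u, v ∈ C(K; ℂ)`. -/
noncomputable def minAbsCM {K : Type*} [TopologicalSpace K] (u v : C(K, ℂ)) : C(K, ℝ) :=
  ⟨fun t => min ‖u t‖ ‖v t‖,
    (continuous_norm.comp u.continuous).min (continuous_norm.comp v.continuous)⟩

/-- The continuous function `t ↦ |f t| - |g t|` for `f, g ∈ C(K; ℂ)`. -/
noncomputable def absDiffCM {K : Type*} [TopologicalSpace K] (f g : C(K, ℂ)) : C(K, ℝ) :=
  ⟨fun t => ‖f t‖ - ‖g t‖,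
    (continuous_norm.comp f.continuous).sub (continuous_norm.comp g.continuous)⟩

open Complex in
private lemma key_ineq (l p q r s g : ℂ)
    (hl : Complex.normSq l = 1) (hp : Complex.normSq p = 1) (hs : Complex.normSq s = 1)
    (hg : Complex.normSq g = 1)
    (him : (p * (starRingEnd ℂ) (g * q) + r * (starRingEnd ℂ) (g * s)).im = 0) :
    4 ≤ Complex.normSq ((1 - l) * p + (1 + l) * (g * q))
      + Complex.normSq ((1 - l) * r + (1 + l) * (g * s)) := by
  have hlc : l * (starRingEnd ℂ) l = 1 := by
    rw [Complex.mul_conj, hl]; norm_num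
  have e2 : (1 - l) * (starRingEnd ℂ) (1 + l) = (starRingEnd ℂ) l - l := by
    rw [map_add, map_one]
    linear_combination -hlc
  have key : ∀ x y : ℂ, Complex.normSq ((1 - l) * x + (1 + l) * (g * y))
      = Complex.normSq (1 - l) * Complex.normSq x
        + Complex.normSq (1 + l) * (Complex.normSq g * Complex.normSq y)
        + 4 * l.im * (x * (starRingEnd ℂ) (g * y)).im := by
    intro x y
    rw [Complex.normSq_add, Complex.normSq_mul, Complex.normSq_mul, Complex.normSq_mul]
    have e1 : (1 - l) * x * (starRingEnd ℂ) ((1 + l) * (g * y))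
        = ((1 - l) * (starRingEnd ℂ) (1 + l)) * (x * (starRingEnd ℂ) (g * y)) := by
      rw [map_mul]; ring
    rw [e1, e2]
    simp only [Complex.mul_re, Complex.sub_re, Complex.sub_im, Complex.conj_re,
      Complex.conj_im]
    ring
  have h4 : Complex.normSq (1 - l) + Complex.normSq (1 + l) = 4 := by
    have hl' : l.re * l.re + l.im * l.im = 1 := by
      simpa [Complex.normSq_apply] using hl
    simp only [Complex.normSq_apply, Complex.sub_re, Complex.sub_im, Complex.add_re,
      Complex.add_im, Complex.one_re, Complex.one_im]
    nlinarith [hl']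
  have hw : (p * (starRingEnd ℂ) (g * q)).im + (r * (starRingEnd ℂ) (g * s)).im = 0 := by
    simpa [Complex.add_im] using him
  have hcross : 4 * l.im * (p * (starRingEnd ℂ) (g * q)).im
      + 4 * l.im * (r * (starRingEnd ℂ) (g * s)).im = 0 := by
    linear_combination (4 * l.im) * hw
  rw [key p q, key r s, hp, hs, hg]
  nlinarith [Complex.normSq_nonneg q, Complex.normSq_nonneg r,
    Complex.normSq_nonneg (1 - l), Complex.normSq_nonneg (1 + l), h4, hcross]

private lemma abs_add_sub_min (A B : ℂ) :
    |‖A + B‖ - ‖A - B‖|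
      ≤ 2 * min ‖A‖ ‖B‖ := by
  have h1 : ‖A + B‖ ≤ ‖A - B‖ + 2 * ‖B‖ := by
    calc ‖A + B‖ = ‖(A - B) + (B + B)‖ := by ring_nf
      _ ≤ ‖A - B‖ + ‖B + B‖ := norm_add_le _ _
      _ ≤ ‖A - B‖ + 2 * ‖B‖ := by
          have := norm_add_le B B; linarith
  have h2 : ‖A - B‖ ≤ ‖A + B‖ + 2 * ‖B‖ := by
    calc ‖A - B‖ = ‖(A + B) - (B + B)‖ := by ring_nf
      _ ≤ ‖A + B‖ + ‖B + B‖ := norm_sub_le _ _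
      _ ≤ ‖A + B‖ + 2 * ‖B‖ := by
          have := norm_add_le B B; linarith
  have h3 : ‖A + B‖ ≤ ‖A - B‖ + 2 * ‖A‖ := by
    calc ‖A + B‖ = ‖(A + A) - (A - B)‖ := by ring_nf
      _ ≤ ‖A + A‖ + ‖A - B‖ := norm_sub_le _ _
      _ ≤ ‖A - B‖ + 2 * ‖A‖ := by
          have := norm_add_le A A; linarith
  have h4 : ‖A - B‖ ≤ ‖A + B‖ + 2 * ‖A‖ := by
    calc ‖A - B‖ = ‖(A + B) - (B + B)‖ := by ring_nf
      _ = ‖(A + A) - (A + B)‖ := by ring_nf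
      _ ≤ ‖A + A‖ + ‖A + B‖ := norm_sub_le _ _
      _ ≤ ‖A + B‖ + 2 * ‖A‖ := by
          have := norm_add_le A A; linarith
  rcases le_total ‖A‖ ‖B‖ with h | h
  · rw [min_eq_left h, abs_le]; constructor <;> linarith
  · rw [min_eq_right h, abs_le]; constructor <;> linarith

private lemma exists_abs_apply_eq_norm {K : Type*} [TopologicalSpace K] [CompactSpace K]
    [Nonempty K] (w : C(K, ℂ)) : ∃ t, ‖w t‖ = ‖w‖ := by
  obtain ⟨t₀, -, ht₀⟩ := isCompact_univ.exists_isMaxOn Set.univ_nonempty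
    ((map_continuous w).norm.continuousOn (s := Set.univ))
  refine ⟨t₀, ?_⟩
  have h1 : ‖w t₀‖ ≤ ‖w‖ := ContinuousMap.norm_coe_le_norm w t₀
  have h2 : ‖w‖ ≤ ‖w t₀‖ :=
    (ContinuousMap.norm_le w (norm_nonneg _)).2 fun t => ht₀ (Set.mem_univ t)
  linarith

/-- If a complex subspace `E` of `C(K; ℂ)` contains a normalized `ε`-almost disjoint
pair, then `E` fails stable phase retrieval with constant `1/(√2 ε)`. -/
theorem almost_disjoint_pair_fails_complex_SPR
    (K : Type*) [TopologicalSpace K] [CompactSpace K] [T2Space K]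
    (E : Submodule ℂ C(K, ℂ)) (ε : ℝ) (hε : 0 < ε)
    (u : C(K, ℂ)) (hu : u ∈ E) (v : C(K, ℂ)) (hv : v ∈ E)
    (hun : ‖u‖ = 1) (hvn : ‖v‖ = 1) (hmin : ‖minAbsCM u v‖ < ε) :
    ∃ f ∈ E, ∃ g ∈ E,
      (1 / (Real.sqrt 2 * ε)) * ‖absDiffCM f g‖ <
        ⨅ c : Metric.sphere (0 : ℂ) 1, ‖f - (c : ℂ) • g‖ := by
  have hK : Nonempty K := by
    by_contra h
    have hu0 : u = 0 := ContinuousMap.ext fun t => absurd ⟨t⟩ h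
    rw [hu0, norm_zero] at hun
    exact one_ne_zero hun.symm
  obtain ⟨tu, htu⟩ := exists_abs_apply_eq_norm u
  obtain ⟨tv, htv⟩ := exists_abs_apply_eq_norm v
  rw [hun] at htu
  rw [hvn] at htv
  set p := u tu with hp_def
  set q := v tu with hq_def
  set r := u tv with hr_def
  set s := v tv with hs_def
  set w : ℂ := p * (starRingEnd ℂ) q + r * (starRingEnd ℂ) s with hw_def
  set γ : ℂ := if w = 0 then 1 else ((‖w‖ : ℝ) : ℂ)⁻¹ * w with hγ_def
  have hγ : ‖γ‖ = 1 := by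
    by_cases hw0 : w = 0
    · simp [hγ_def, hw0]
    · have hwa : ‖w‖ ≠ 0 := by
        simpa using hw0
      rw [hγ_def, if_neg hw0, norm_mul, norm_inv, Complex.norm_real, norm_norm]
      field_simp
  have hsum : ∀ x : ℂ, p * (starRingEnd ℂ) (x * q) + r * (starRingEnd ℂ) (x * s)
      = (starRingEnd ℂ) x * w := by
    intro x
    rw [hw_def, map_mul, map_mul]; ring
  have him : (p * (starRingEnd ℂ) (γ * q) + r * (starRingEnd ℂ) (γ * s)).im = 0 := by
    rw [hsum γ]
    by_cases hw0 : w = 0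
    · simp [hw0]
    · rw [hγ_def, if_neg hw0, map_mul, map_inv₀, Complex.conj_ofReal, mul_assoc,
        mul_comm ((starRingEnd ℂ) w) w, Complex.mul_conj]
      simp [← Complex.ofReal_inv, ← Complex.ofReal_mul]
  refine ⟨u + γ • v, E.add_mem hu (E.smul_mem _ hv), u - γ • v,
    E.sub_mem hu (E.smul_mem _ hv), ?_⟩
  set f := u + γ • v with hf_def
  set g := u - γ • v with hg_def
  -- upper bound on the norm of absDiffCM f g
  have habs : ‖absDiffCM f g‖ ≤ 2 * ‖minAbsCM u v‖ := by
    refine (ContinuousMap.norm_le _ (by positivity)).2 fun t => ?_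
    have hf : f t = u t + γ * v t := by
      simp [hf_def]
    have hg : g t = u t - γ * v t := by
      simp [hg_def]
    simp only [absDiffCM, ContinuousMap.coe_mk, Real.norm_eq_abs]
    rw [hf, hg]
    have hkey := abs_add_sub_min (u t) (γ * v t)
    have hmin_eq : min ‖u t‖ ‖γ * v t‖ = minAbsCM u v t := by
      simp [minAbsCM, map_mul, hγ]
    rw [hmin_eq] at hkey
    have h0 : minAbsCM u v t ≤ ‖minAbsCM u v‖ := by
      have h1 := ContinuousMap.norm_coe_le_norm (minAbsCM u v) t
      rw [Real.norm_eq_abs] at h1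
      exact le_trans (le_abs_self _) h1
    linarith
  -- lower bound on the infimum
  have hnormsq : ∀ z : ℂ, ‖z‖ = 1 → Complex.normSq z = 1 := by
    intro z hz
    rw [Complex.normSq_eq_norm_sq, hz]; norm_num
  have hlow : ∀ c : Metric.sphere (0 : ℂ) 1, Real.sqrt 2 ≤ ‖f - (c : ℂ) • g‖ := by
    rintro ⟨l, hl⟩
    have hl1 : ‖l‖ = 1 := by
      have := mem_sphere_zero_iff_norm.mp hl
      exact this
    have e1 : (f - l • g) tu = (1 - l) * p + (1 + l) * (γ * q) := by
      simp only [ContinuousMap.sub_apply, ContinuousMap.smul_apply, smul_eq_mul,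
        hf_def, hg_def, ContinuousMap.add_apply, ContinuousMap.smul_apply, smul_eq_mul]
      rw [← hp_def, ← hq_def]; ring
    have e2 : (f - l • g) tv = (1 - l) * r + (1 + l) * (γ * s) := by
      simp only [ContinuousMap.sub_apply, ContinuousMap.smul_apply, smul_eq_mul,
        hf_def, hg_def, ContinuousMap.add_apply, ContinuousMap.smul_apply, smul_eq_mul]
      rw [← hr_def, ← hs_def]; ring
    have hX := key_ineq l p q r s γ (hnormsq l hl1) (hnormsq p htu) (hnormsq s htv)
      (hnormsq γ hγ) him
    have hb1 : Complex.normSq ((f - l • g) tu) ≤ ‖f - l • g‖ ^ 2 := by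
      rw [Complex.normSq_eq_norm_sq]
      have := ContinuousMap.norm_coe_le_norm (f - l • g) tu
      exact pow_le_pow_left₀ (norm_nonneg _) this 2
    have hb2 : Complex.normSq ((f - l • g) tv) ≤ ‖f - l • g‖ ^ 2 := by
      rw [Complex.normSq_eq_norm_sq]
      have := ContinuousMap.norm_coe_le_norm (f - l • g) tv
      exact pow_le_pow_left₀ (norm_nonneg _) this 2
    rw [e1] at hb1
    rw [e2] at hb2
    have h2 : 2 ≤ ‖f - l • g‖ ^ 2 := by linarith
    calc Real.sqrt 2 ≤ Real.sqrt (‖f - l • g‖ ^ 2) := Real.sqrt_le_sqrt h2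
      _ = ‖f - l • g‖ := Real.sqrt_sq (norm_nonneg _)
  have hne : Nonempty (Metric.sphere (0 : ℂ) 1) := by
    refine ⟨⟨1, ?_⟩⟩
    simp
  have hinf : Real.sqrt 2 ≤ ⨅ c : Metric.sphere (0 : ℂ) 1, ‖f - (c : ℂ) • g‖ :=
    le_ciInf hlow
  have hS2 : (0 : ℝ) < Real.sqrt 2 := by positivity
  have hlhs : 1 / (Real.sqrt 2 * ε) * ‖absDiffCM f g‖ < Real.sqrt 2 := by
    have h1 : ‖absDiffCM f g‖ < 2 * ε := lt_of_le_of_lt habs (by linarith)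
    rw [div_mul_eq_mul_div, one_mul, div_lt_iff₀ (by positivity)]
    calc ‖absDiffCM f g‖ < 2 * ε := h1
      _ = Real.sqrt 2 * (Real.sqrt 2 * ε) := by
          rw [← mul_assoc, Real.mul_self_sqrt (by norm_num : (0:ℝ) ≤ 2)]
  linarith
end

section
/- Let K be a compact Hausdorff topological space and let E be a complex linear subspace of C(K; ℂ). Then the following are equivalent: (1) E fails stable phase retrieval, i.e., for every C ≥ 1 there exist f, g ∈ E with inf{‖f − λg‖∞ : λ ∈ ℂ, |λ| = 1} > C·‖ |f| − |g| ‖∞; (2) for every m with 0 < m < 1/√2 − 1/2 and every ε > 0, there exist u, v ∈ E with ‖u‖∞ = ‖v‖∞ = 1, ‖u − λv‖∞ ≥ m for every λ ∈ ℂ with |λ| = 1, and ‖ t ↦ √(|Re(u(t)·conj(v(t)))|) ‖∞ < ε; (3) there exists m > 0 such that for every ε > 0 there exist u, v ∈ E with ‖u‖∞ = ‖v‖∞ = 1, ‖u − λv‖∞ ≥ m for every λ ∈ ℂ with |λ| = 1, and ‖ t ↦ √(|Re(u(t)·conj(v(t)))|) ‖∞ < ε. -/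
/-- The continuous function `t ↦ √|Re (u t * conj (v t))|` for `u, v ∈ C(K; ℂ)`. -/
noncomputable def sqrtReMulConjCM {K : Type*} [TopologicalSpace K]
    (u v : C(K, ℂ)) : C(K, ℝ) :=
  ⟨fun t => Real.sqrt |(u t * (starRingEnd ℂ) (v t)).re|,
    (Complex.continuous_re.comp
      (u.continuous.mul (Complex.continuous_conj.comp v.continuous))).abs.sqrt⟩

lemma exists_unimodular (γ : ℂ) : ∃ c : ℂ, ‖c‖ = 1 ∧ ‖γ - c‖ = |‖γ‖ - 1| := by
  rcases eq_or_ne γ 0 with rfl | h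
  · exact ⟨1, by simp, by simp⟩
  · have hγ : (0:ℝ) < ‖γ‖ := norm_pos_iff.mpr h
    refine ⟨(‖γ‖⁻¹ : ℝ) • γ, ?_, ?_⟩
    · rw [norm_smul, Real.norm_eq_abs, abs_of_pos (inv_pos.mpr hγ), inv_mul_cancel₀ hγ.ne']
    · have h2 : γ - (‖γ‖⁻¹ : ℝ) • γ = (1 - (‖γ‖⁻¹ : ℝ)) • γ := by
        rw [sub_smul, one_smul]
      rw [h2, norm_smul, Real.norm_eq_abs]
      rw [abs_sub_comm 1 ‖γ‖⁻¹, ← abs_of_pos hγ, ← abs_mul]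
      rw [abs_of_pos hγ, sub_mul, inv_mul_cancel₀ hγ.ne', one_mul, abs_sub_comm]

lemma re_add_mul_conj_sub (x y : ℂ) :
    ((x + y) * (starRingEnd ℂ) (x - y)).re = ‖x‖ ^ 2 - ‖y‖ ^ 2 := by
  rw [Complex.sq_norm, Complex.sq_norm]
  simp [Complex.mul_re, Complex.normSq_apply]
  ring


lemma cm_exists_norm_eq {K : Type*} [TopologicalSpace K] [CompactSpace K] [Nonempty K]
    (u : C(K, ℂ)) : ∃ t, ‖u t‖ = ‖u‖ := by
  obtain ⟨t0, -, ht0⟩ := isCompact_univ.exists_isMaxOn Set.univ_nonempty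
    (continuous_norm.comp u.continuous).continuousOn (f := fun t => ‖u t‖)
  refine ⟨t0, le_antisymm (u.norm_coe_le_norm t0) ?_⟩
  exact (u.norm_le (norm_nonneg _)).mpr fun x => ht0 (Set.mem_univ x)

-- L1
lemma half_sep {K : Type*} [TopologicalSpace K] [CompactSpace K]
    {u v : C(K, ℂ)} {m : ℝ} (hm : 0 < m) (hu : ‖u‖ = 1) (hv : ‖v‖ ≤ 1)
    (hsep : ∀ c : ℂ, ‖c‖ = 1 → m ≤ ‖u - c • v‖) (w : ℂ) (hw : ‖w‖ ≤ 1) :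
    m / 2 ≤ ‖u - w • v‖ := by
  have hm2 : m ≤ 2 := by
    have := hsep 1 (by simp)
    calc m ≤ ‖u - (1:ℂ) • v‖ := this
    _ ≤ ‖u‖ + ‖v‖ := by rw [one_smul]; exact norm_sub_le _ _
    _ ≤ 2 := by rw [hu]; linarith
  have hK : Nonempty K := by
    by_contra hK
    rw [not_nonempty_iff] at hK
    have : u = 0 := by ext t; exact absurd (Nonempty.intro t) (by simpa using hK)
    rw [this, norm_zero] at hu; norm_num at hu
  rcases le_or_gt (m / 2) (1 - ‖w‖) with hcase | hcase
  · obtain ⟨t0, ht0⟩ := cm_exists_norm_eq u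
    calc m / 2 ≤ 1 - ‖w‖ := hcase
    _ ≤ ‖u t0‖ - ‖w * v t0‖ := by
        rw [ht0, hu, norm_mul]
        have := v.norm_coe_le_norm t0
        nlinarith [norm_nonneg (v t0), norm_nonneg w]
    _ ≤ ‖u t0 - w * v t0‖ := norm_sub_norm_le _ _
    _ = ‖(u - w • v) t0‖ := by simp [ContinuousMap.sub_apply, ContinuousMap.smul_apply, smul_eq_mul]
    _ ≤ ‖u - w • v‖ := (u - w • v).norm_coe_le_norm t0
  · have hw0 : (0:ℝ) < ‖w‖ := by linarith
    have hwne : w ≠ 0 := by simpa [norm_pos_iff] using hw0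
    set c : ℂ := (‖w‖⁻¹ : ℝ) • w with hc
    have hcnorm : ‖c‖ = 1 := by
      rw [hc, norm_smul, Real.norm_eq_abs, abs_of_pos (inv_pos.mpr hw0),
        inv_mul_cancel₀ hw0.ne']
    have hdist : ‖c - w‖ = 1 - ‖w‖ := by
      have h2 : c - w = ((‖w‖⁻¹ : ℝ) - 1) • w := by rw [sub_smul, one_smul]
      rw [h2, norm_smul, Real.norm_eq_abs]
      rw [abs_of_nonneg (by nlinarith [inv_anti₀ hw0 hw]), sub_mul,
        inv_mul_cancel₀ hw0.ne', one_mul]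
    have key : ‖u - c • v‖ ≤ ‖u - w • v‖ + (1 - ‖w‖) := by
      calc ‖u - c • v‖ = ‖(u - w • v) - ((c - w) • v)‖ := by rw [sub_smul]; ring_nf
      _ ≤ ‖u - w • v‖ + ‖(c - w) • v‖ := norm_sub_le _ _
      _ ≤ ‖u - w • v‖ + (1 - ‖w‖) := by
          rw [norm_smul, hdist]
          nlinarith [norm_nonneg v]
    have := hsep c hcnorm
    linarith

lemma ptwise_absdiff (x y : ℂ) :
    |‖x + y‖ - ‖x - y‖| ≤ 2 * Real.sqrt |(x * (starRingEnd ℂ) y).re| := by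
  set X := ‖x + y‖ with hX
  set Y := ‖x - y‖ with hY
  have hX0 : 0 ≤ X := norm_nonneg _
  have hY0 : 0 ≤ Y := norm_nonneg _
  have h4 : X ^ 2 - Y ^ 2 = 4 * (x * (starRingEnd ℂ) y).re := by
    rw [hX, hY, Complex.sq_norm, Complex.sq_norm]
    simp [Complex.normSq_apply, Complex.mul_re, Complex.conj_re, Complex.conj_im]
    ring
  have h5 : (X - Y) ^ 2 ≤ 4 * |(x * (starRingEnd ℂ) y).re| := by
    have habs : |X ^ 2 - Y ^ 2| = 4 * |(x * (starRingEnd ℂ) y).re| := by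
      rw [h4, abs_mul]; norm_num
    nlinarith [le_abs_self (X ^ 2 - Y ^ 2), neg_abs_le (X ^ 2 - Y ^ 2), sq_nonneg (X - Y),
      mul_nonneg hX0 hY0]
  calc |X - Y| = Real.sqrt ((X - Y) ^ 2) := (Real.sqrt_sq_eq_abs _).symm
  _ ≤ Real.sqrt (4 * |(x * (starRingEnd ℂ) y).re|) := Real.sqrt_le_sqrt h5
  _ = 2 * Real.sqrt |(x * (starRingEnd ℂ) y).re| := by
      rw [Real.sqrt_mul (by norm_num), show (4:ℝ) = 2 ^ 2 by norm_num, Real.sqrt_sq (by norm_num)]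

lemma absdiff_le {K : Type*} [TopologicalSpace K] [CompactSpace K] (u v : C(K, ℂ)) :
    ‖absDiffCM (u + v) (u - v)‖ ≤ 2 * ‖sqrtReMulConjCM u v‖ := by
  rw [ContinuousMap.norm_le _ (by positivity)]
  intro t
  have h1 : absDiffCM (u + v) (u - v) t
      = ‖u t + v t‖ - ‖u t - v t‖ := by
    simp [absDiffCM]
  rw [Real.norm_eq_abs, h1]
  refine le_trans (ptwise_absdiff (u t) (v t)) ?_
  have h2 : Real.sqrt |(u t * (starRingEnd ℂ) (v t)).re| = sqrtReMulConjCM u v t := rfl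
  rw [h2]
  have h3 := (sqrtReMulConjCM u v).norm_coe_le_norm t
  rw [Real.norm_eq_abs] at h3
  linarith [le_abs_self (sqrtReMulConjCM u v t)]

lemma sep_swap {K : Type*} [TopologicalSpace K] [CompactSpace K]
    {u v : C(K, ℂ)} {m : ℝ}
    (hsep : ∀ c : ℂ, ‖c‖ = 1 → m ≤ ‖u - c • v‖) :
    ∀ c : ℂ, ‖c‖ = 1 → m ≤ ‖v - c • u‖ := by
  intro c hc
  have hcc : c * (starRingEnd ℂ) c = 1 := by
    rw [Complex.mul_conj]
    norm_cast
    rw [← Complex.sq_norm, hc]; norm_num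
  have h1 : u - (starRingEnd ℂ) c • v = (-(starRingEnd ℂ) c) • (v - c • u) := by
    rw [neg_smul, smul_sub, smul_smul, mul_comm, hcc, one_smul]
    abel
  have h2 := hsep ((starRingEnd ℂ) c) (by rw [RCLike.norm_conj]; exact hc)
  rw [h1, norm_smul, norm_neg, RCLike.norm_conj, hc, one_mul] at h2
  exact h2

lemma sep_scaled {K : Type*} [TopologicalSpace K] [CompactSpace K]
    {u v : C(K, ℂ)} {m : ℝ} (hm : 0 < m) (hu : ‖u‖ = 1) (hv : ‖v‖ = 1)
    (hsep : ∀ c : ℂ, ‖c‖ = 1 → m ≤ ‖u - c • v‖) :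
    ∀ c : ℂ, ‖c‖ = 1 → m / 2 ≤ ‖(u + v) - c • (u - v)‖ := by
  intro c hc
  have hc2 : c.re ^ 2 + c.im ^ 2 = 1 := by
    have : ‖c‖ ^ 2 = 1 := by rw [hc]; norm_num
    rwa [Complex.sq_norm, Complex.normSq_apply, ← sq, ← sq] at this
  have key : (u + v) - c • (u - v) = (1 - c) • u + (1 + c) • v := by
    ext t
    simp [ContinuousMap.add_apply, ContinuousMap.sub_apply, ContinuousMap.smul_apply,
      smul_eq_mul]
    ring
  rcases le_or_gt c.re 0 with hre | hre
  · -- a = 1 - c dominant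
    set a : ℂ := 1 - c with ha
    have ha2 : ‖a‖ ^ 2 = 2 - 2 * c.re := by
      rw [Complex.sq_norm, Complex.normSq_apply]
      simp [ha, Complex.sub_re, Complex.sub_im]
      nlinarith [hc2]
    have ha1 : 1 ≤ ‖a‖ := by nlinarith [norm_nonneg a]
    have hane : a ≠ 0 := by
      intro h; rw [h, norm_zero] at ha1; norm_num at ha1
    set w : ℂ := -((1 + c) / a) with hw
    have hwle : ‖w‖ ≤ 1 := by
      rw [hw, norm_neg, norm_div]
      rw [div_le_one (by linarith)]
      have : ‖(1:ℂ) + c‖ ^ 2 = 2 + 2 * c.re := by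
        rw [Complex.sq_norm, Complex.normSq_apply]
        simp [Complex.add_re, Complex.add_im]
        nlinarith [hc2]
      nlinarith [norm_nonneg ((1:ℂ) + c), norm_nonneg a]
    have hfact : (1 - c) • u + (1 + c) • v = a • (u - w • v) := by
      ext t
      simp [ContinuousMap.add_apply, ContinuousMap.sub_apply, ContinuousMap.smul_apply,
        smul_eq_mul, hw, ha]
      have hane' : (1:ℂ) - c ≠ 0 := hane
      field_simp
    rw [key, hfact, norm_smul]
    have := half_sep hm hu hv.le hsep w hwle
    nlinarith
  · set b : ℂ := 1 + c with hb
    have hb2 : ‖b‖ ^ 2 = 2 + 2 * c.re := by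
      rw [Complex.sq_norm, Complex.normSq_apply]
      simp [hb, Complex.add_re, Complex.add_im]
      nlinarith [hc2]
    have hb1 : 1 ≤ ‖b‖ := by nlinarith [norm_nonneg b]
    have hbne : b ≠ 0 := by
      intro h; rw [h, norm_zero] at hb1; norm_num at hb1
    set w : ℂ := -((1 - c) / b) with hw
    have hwle : ‖w‖ ≤ 1 := by
      rw [hw, norm_neg, norm_div]
      rw [div_le_one (by linarith)]
      have : ‖(1:ℂ) - c‖ ^ 2 = 2 - 2 * c.re := by
        rw [Complex.sq_norm, Complex.normSq_apply]
        simp [Complex.sub_re, Complex.sub_im]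
        nlinarith [hc2]
      nlinarith [norm_nonneg ((1:ℂ) - c), norm_nonneg b]
    have hfact : (1 - c) • u + (1 + c) • v = b • (v - w • u) := by
      ext t
      simp [ContinuousMap.add_apply, ContinuousMap.sub_apply, ContinuousMap.smul_apply,
        smul_eq_mul, hw, hb]
      have hbne' : (1:ℂ) + c ≠ 0 := hbne
      field_simp
      ring
    rw [key, hfact, norm_smul]
    have := half_sep hm hv hu.le (sep_swap hsep) w hwle
    nlinarith


lemma case1_real (a b e f p q m ρ δ : ℝ) (hx2 : a^2+b^2 = 1) (hy2 : e^2+f^2 ≤ 1)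
    (hRe : |a*e + b*f| ≤ 3*δ) (hc2 : p^2+q^2 = 1) (hp : ρ ≤ |p|) (hρ0 : 0 ≤ ρ)
    (hδ : 6*δ ≤ ρ^2 - m^2) :
    m^2 ≤ (a - (p*e - q*f))^2 + (b - (p*f + q*e))^2 := by
  have hS := abs_le.mp hRe
  have hp2 : ρ^2 ≤ p^2 := by nlinarith [sq_abs p, abs_nonneg p]
  have hp1 : p ≤ 1 := by nlinarith [sq_nonneg q, sq_nonneg (p-1)]
  have hp1' : -1 ≤ p := by nlinarith [sq_nonneg q, sq_nonneg (p+1)]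
  have hps : p*(a*e + b*f) ≤ 3*δ := by nlinarith [hS.1, hS.2]
  have hLag' : (b*e - a*f)^2 ≤ e^2 + f^2 := by nlinarith [sq_nonneg (a*e + b*f)]
  have hq : 2*q*(b*e - a*f) ≤ q^2 + (e^2+f^2) := by
    nlinarith [sq_nonneg (q - (b*e - a*f))]
  nlinarith [hps, hq, hp2, hy2, hδ]

lemma case1_complex (x y c : ℂ) (m ρ δ : ℝ) (hm : 0 < m) (hx : ‖x‖ = 1) (hy : ‖y‖ ≤ 1)
    (hRe : |(x * (starRingEnd ℂ) y).re| ≤ 3*δ) (hc : ‖c‖ = 1) (hp : ρ ≤ |c.re|)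
    (hρ0 : 0 ≤ ρ) (hδ : 6*δ ≤ ρ^2 - m^2) : m ≤ ‖x - c*y‖ := by
  have hx2 : x.re^2 + x.im^2 = 1 := by
    have : ‖x‖^2 = 1 := by rw [hx]; norm_num
    rwa [Complex.sq_norm, Complex.normSq_apply, ← sq, ← sq] at this
  have hy2 : y.re^2 + y.im^2 ≤ 1 := by
    have h1 : ‖y‖^2 ≤ 1 := by nlinarith [norm_nonneg y]
    rwa [Complex.sq_norm, Complex.normSq_apply, ← sq, ← sq] at h1
  have hc2 : c.re^2 + c.im^2 = 1 := by
    have : ‖c‖^2 = 1 := by rw [hc]; norm_num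
    rwa [Complex.sq_norm, Complex.normSq_apply, ← sq, ← sq] at this
  have hRe' : |x.re*y.re + x.im*y.im| ≤ 3*δ := by
    have h2 : (x * (starRingEnd ℂ) y).re = x.re*y.re + x.im*y.im := by
      simp [Complex.mul_re, Complex.conj_re, Complex.conj_im]
    rwa [h2] at hRe
  have hexp : ‖x - c*y‖^2 = (x.re - (c.re*y.re - c.im*y.im))^2
      + (x.im - (c.re*y.im + c.im*y.re))^2 := by
    rw [Complex.sq_norm, Complex.normSq_apply]
    simp [Complex.sub_re, Complex.sub_im, Complex.mul_re, Complex.mul_im]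
    ring
  have hsq : m^2 ≤ ‖x - c*y‖^2 := by
    rw [hexp]
    exact case1_real _ _ _ _ _ _ _ _ _ hx2 hy2 hRe' hc2 hp hρ0 hδ
  calc m = Real.sqrt (m^2) := (Real.sqrt_sq hm.le).symm
  _ ≤ Real.sqrt (‖x - c*y‖^2) := Real.sqrt_le_sqrt hsq
  _ = ‖x - c*y‖ := Real.sqrt_sq (norm_nonneg _)

lemma normsq_ofReal_sub (s : ℝ) (c : ℂ) : ‖(s:ℂ) - c‖^2 = (s - c.re)^2 + c.im^2 := by
  rw [Complex.sq_norm, Complex.normSq_apply]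
  simp [Complex.sub_re, Complex.sub_im]
  ring

lemma normsq_ofReal_add (s : ℝ) (c : ℂ) : ‖(s:ℂ) + c‖^2 = (s + c.re)^2 + c.im^2 := by
  rw [Complex.sq_norm, Complex.normSq_apply]
  simp [Complex.add_re, Complex.add_im]
  ring

lemma helper_Alb (s p q A ρ : ℝ) (hA2 : A^2 = (s-p)^2 + q^2) (hc2 : p^2+q^2 = 1)
    (hp : |p| ≤ ρ) (hs0 : 0 ≤ s) : 1 + s^2 - 2*s*ρ ≤ A^2 := by
  nlinarith [le_abs_self p, mul_le_mul_of_nonneg_left hp hs0]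

lemma helper_Apos (s A ρ : ℝ) (hlb : 1 + s^2 - 2*s*ρ ≤ A^2) (hρ : ρ < 1/2)
    (hρ0 : 0 ≤ ρ) (hs0 : 0 ≤ s) (hA0 : 0 ≤ A) : 0 < A := by
  rcases eq_or_lt_of_le hA0 with h | h
  · exfalso; nlinarith [sq_nonneg (s - ρ)]
  · exact h

lemma helper_B (A A' B s p : ℝ) (hA0 : 0 < A) (hB : B = |A'/A - 1|)
    (hdiff : A'^2 - A^2 = 4*s*p) (hA'0 : 0 ≤ A') (hs0 : 0 ≤ s) :
    A^2 * B ≤ 4*s*|p| := by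
  have e0 : A'/A - 1 = (A' - A)/A := by field_simp
  have h1 : A^2*B = A*|A'-A| := by
    rw [hB, e0, abs_div, abs_of_pos hA0]
    field_simp
  have h2 : A*|A'-A| ≤ (A'+A)*|A'-A| :=
    mul_le_mul_of_nonneg_right (by linarith) (abs_nonneg _)
  have h3 : (A'+A)*|A'-A| = |A'^2 - A^2| := by
    rw [← abs_of_nonneg (by positivity : (0:ℝ) ≤ A' + A), ← abs_mul]
    congr 1
    ring
  have h4 : |A'^2 - A^2| = 4*s*|p| := by
    rw [hdiff, abs_mul, abs_of_nonneg (by positivity : (0:ℝ) ≤ 4*s)]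
  linarith [h1, h2, h3.le, h4.le, h3.ge, h4.ge]

lemma helper_N1 (A2 N B G0 M : ℝ) (h1 : 1 ≤ N + B*G0) (hA2 : 0 ≤ A2)
    (hBle : A2*B ≤ M) (hG0 : 0 ≤ G0) : A2 ≤ A2*N + M*G0 := by
  nlinarith [mul_le_mul_of_nonneg_left h1 hA2, mul_le_mul_of_nonneg_right hBle hG0]

lemma case2_core (A N G0 s P α m ρ qb δ : ℝ)
    (hqbeq : qb = (1 - 2*ρ - 4*ρ^2)/2) (hδq : 2*δ ≤ qb - m) (hδ0 : 0 < δ)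
    (hm0 : 0 < m) (hAlb : 1 + s^2 - 2*s*ρ ≤ A^2) (hA2 : A ≤ 2) (hA0 : 0 < A)
    (hs0 : 0 < s) (hs1 : s ≤ 1) (hρp : P ≤ ρ) (hP0 : 0 ≤ P) (hρ1 : ρ ≤ 1)
    (hα1 : 1 ≤ α) (hsα : s * α = 1) (hG : G0 ≤ (α+1)/2 + δ/2) (hG0 : 0 ≤ G0)
    (hN0 : 0 ≤ N) (hN1 : A^2 ≤ A^2*N + (4*s*P)*G0) :
    m ≤ A * N := by
  have h2 : (4*s*P)*G0 ≤ (4*s*P)*((α+1)/2 + δ/2) :=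
    mul_le_mul_of_nonneg_left hG (by positivity)
  have e1 : (4*s*P)*((α+1)/2 + δ/2) = 2*P*(s*α) + 2*P*s + 2*(s*P)*δ := by ring
  have h3 : 2*P*(s*α) + 2*P*s + 2*(s*P)*δ ≤ 2*ρ + 2*ρ*s + 2*δ := by
    have i1 : P*s ≤ ρ*s := mul_le_mul_of_nonneg_right hρp hs0.le
    have i2 : s*P ≤ 1 := by nlinarith
    have i3 : (s*P)*δ ≤ 1*δ := mul_le_mul_of_nonneg_right i2 hδ0.le
    rw [hsα]
    nlinarith
  have hN' : A^2 ≤ A^2*N + (2*ρ + 2*ρ*s + 2*δ) := by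
    rw [← e1] at h3
    linarith [h2.trans h3]
  have hfin : m*A ≤ A^2*N := by
    nlinarith [sq_nonneg (s - 2*ρ), mul_le_mul_of_nonneg_left hA2 hm0.le]
  have h5 : A*m ≤ A*(A*N) := by nlinarith [hfin]
  exact le_of_mul_le_mul_left h5 hA0

set_option maxHeartbeats 2000000 in
lemma dir12 {K : Type*} [TopologicalSpace K] [CompactSpace K] (E : Submodule ℂ C(K, ℂ))
    (h1 : ∀ C : ℝ, 1 ≤ C → ∃ f ∈ E, ∃ g ∈ E,
      C * ‖absDiffCM f g‖ < ⨅ c : Metric.sphere (0 : ℂ) 1, ‖f - (c : ℂ) • g‖) :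
    ∀ m : ℝ, 0 < m → m < 1 / Real.sqrt 2 - 1 / 2 → ∀ ε > (0 : ℝ),
      ∃ u ∈ E, ∃ v ∈ E, ‖u‖ = 1 ∧ ‖v‖ = 1 ∧
        (∀ c : ℂ, ‖c‖ = 1 → m ≤ ‖u - c • v‖) ∧ ‖sqrtReMulConjCM u v‖ < ε := by
  intro m hm0 hmρ ε hε
  -- numeric setup
  obtain ⟨ρs, hmρs, hρs4, hρshalf⟩ :
      ∃ ρs : ℝ, m < ρs ∧ 4*ρs^2 + 4*ρs = 1 ∧ ρs < 1/2 := by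
    have hr0 : (0:ℝ) < Real.sqrt 2 := Real.sqrt_pos.mpr (by norm_num)
    have hr2 : Real.sqrt 2 ^ 2 = 2 := Real.sq_sqrt (by norm_num)
    have hr1 : 1 < Real.sqrt 2 := by nlinarith
    have hrlt2 : Real.sqrt 2 < 2 := by nlinarith
    refine ⟨(Real.sqrt 2 - 1)/2, ?_, by nlinarith, by nlinarith⟩
    have hρstar : 1 / Real.sqrt 2 - 1 / 2 = (Real.sqrt 2 - 1)/2 := by
      rw [div_sub_div _ _ hr0.ne' (two_ne_zero),
        div_eq_div_iff (by positivity) (by norm_num)]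
      nlinarith
    rwa [hρstar] at hmρ
  obtain ⟨ρ, qb, hmρ', hρρs, hρ0, hρhalf, hqbeq, hmqb⟩ :
      ∃ ρ qb : ℝ, m < ρ ∧ ρ ≤ ρs ∧ 0 < ρ ∧ ρ < 1/2 ∧ qb = (1 - 2*ρ - 4*ρ^2)/2 ∧ m < qb := by
    refine ⟨(m + ρs)/2, (1 - 2*((m + ρs)/2) - 4*((m + ρs)/2)^2)/2, by linarith, by linarith,
      by linarith, by linarith, rfl, ?_⟩
    nlinarith [mul_pos (sub_pos.mpr hmρs) (show (0:ℝ) < 3 + m + 3*ρs by linarith)]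
  obtain ⟨δ, hδ0, hδ1, hδε, hδρ, hδq⟩ :
      ∃ δ : ℝ, 0 < δ ∧ δ ≤ 1 ∧ δ ≤ ε^2/4 ∧ 6*δ ≤ ρ^2 - m^2 ∧ 2*δ ≤ qb - m := by
    refine ⟨min (min 1 (ε^2/4)) (min ((ρ^2 - m^2)/6) ((qb - m)/2)), ?_, ?_, ?_, ?_, ?_⟩
    · apply lt_min (lt_min one_pos (by positivity))
      apply lt_min
      · nlinarith
      · linarith
    · exact le_trans (min_le_left _ _) (min_le_left _ _)
    · exact le_trans (min_le_left _ _) (min_le_right _ _)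
    · have := le_trans (min_le_right (min 1 (ε^2/4)) (min ((ρ^2 - m^2)/6) ((qb - m)/2)))
        (min_le_left ((ρ^2 - m^2)/6) ((qb - m)/2))
      linarith
    · have := le_trans (min_le_right (min 1 (ε^2/4)) (min ((ρ^2 - m^2)/6) ((qb - m)/2)))
        (min_le_right ((ρ^2 - m^2)/6) ((qb - m)/2))
      linarith
  -- get the witness pair
  obtain ⟨C, hC1, hCδ⟩ : ∃ C : ℝ, 1 ≤ C ∧ 2/δ ≤ C := ⟨max 1 (2/δ), le_max_left _ _, le_max_right _ _⟩
  obtain ⟨f, hfE, g, hgE, hlt⟩ := h1 C hC1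
  obtain ⟨D, hD⟩ : ∃ D : ℝ, D = ‖absDiffCM f g‖ := ⟨_, rfl⟩
  rw [← hD] at hlt
  have hD0 : 0 ≤ D := hD ▸ norm_nonneg _
  -- minimizing unimodular constant
  have hcont : Continuous fun c : ℂ => ‖f - c • g‖ :=
    (continuous_const.sub (continuous_id.smul continuous_const)).norm
  obtain ⟨c₀, hc₀mem, hc₀min⟩ := (isCompact_sphere (0:ℂ) 1).exists_isMinOn
    (NormedSpace.sphere_nonempty.mpr zero_le_one) hcont.continuousOn
  have hc₀ : ‖c₀‖ = 1 := by rwa [Metric.mem_sphere, dist_zero_right] at hc₀mem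
  obtain ⟨d, hd⟩ : ∃ d : ℝ, d = ‖f - c₀ • g‖ := ⟨_, rfl⟩
  have hd_le : ∀ c : ℂ, ‖c‖ = 1 → d ≤ ‖f - c • g‖ := by
    intro c hc
    rw [hd]
    exact isMinOn_iff.mp hc₀min c (by rwa [Metric.mem_sphere, dist_zero_right])
  have hCDd : C * D < d := by
    refine lt_of_lt_of_le hlt ?_
    rw [hd]
    exact ciInf_le ⟨0, by rintro x ⟨c, rfl⟩; positivity⟩ (⟨c₀, hc₀mem⟩ : Metric.sphere (0:ℂ) 1)
  have hd0 : 0 < d := lt_of_le_of_lt (mul_nonneg (le_trans zero_le_one hC1) hD0) hCDd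
  have hDd : D < d * δ / 2 := by
    have h3 : (2/δ) * D ≤ C * D := mul_le_mul_of_nonneg_right hCδ hD0
    have h4 : (2/δ) * D < d := lt_of_le_of_lt h3 hCDd
    have h5 := mul_lt_mul_of_pos_right h4 (show (0:ℝ) < δ/2 by positivity)
    have h6 : (2/δ) * D * (δ/2) = D := by field_simp
    linarith [h5, h6.symm.le]
  -- scaled pair
  obtain ⟨F, hF⟩ : ∃ F : C(K, ℂ), F = ((d:ℂ))⁻¹ • f := ⟨_, rfl⟩
  obtain ⟨G, hG⟩ : ∃ G : C(K, ℂ), G = ((d:ℂ)⁻¹ * c₀) • g := ⟨_, rfl⟩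
  have hFE : F ∈ E := by rw [hF]; exact E.smul_mem _ hfE
  have hGE : G ∈ E := by rw [hG]; exact E.smul_mem _ hgE
  have hdinv : ‖((d:ℂ))⁻¹‖ = d⁻¹ := by
    rw [norm_inv, Complex.norm_real, Real.norm_eq_abs, abs_of_pos hd0]
  have hFG : F - G = ((d:ℂ))⁻¹ • (f - c₀ • g) := by
    rw [hF, hG, smul_sub, smul_smul]
  have hFG1 : ‖F - G‖ = 1 := by
    rw [hFG, norm_smul, hdinv, ← hd, inv_mul_cancel₀ hd0.ne']
  have hsepFG : ∀ c : ℂ, ‖c‖ = 1 → 1 ≤ ‖F - c • G‖ := by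
    intro c hc
    have h7 : F - c • G = ((d:ℂ))⁻¹ • (f - (c * c₀) • g) := by
      rw [hF, hG, smul_sub, smul_smul, smul_smul]
      ring_nf
    rw [h7, norm_smul, hdinv]
    have h8 := hd_le (c * c₀) (by rw [norm_mul, hc, hc₀, one_mul])
    calc (1:ℝ) = d⁻¹ * d := (inv_mul_cancel₀ hd0.ne').symm
    _ ≤ d⁻¹ * ‖f - (c * c₀) • g‖ := mul_le_mul_of_nonneg_left h8 (by positivity)
  have hptFG : ∀ t, |‖F t‖ - ‖G t‖| ≤ δ/2 := by
    intro t
    have h9 : ‖F t‖ = d⁻¹ * ‖f t‖ := by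
      rw [hF]; simp only [ContinuousMap.smul_apply, norm_smul, hdinv]
    have h10 : ‖G t‖ = d⁻¹ * ‖g t‖ := by
      rw [hG]; simp only [ContinuousMap.smul_apply, norm_smul, norm_mul, hdinv,
        hc₀, mul_one]
    have h11 : |‖f t‖ - ‖g t‖| ≤ D := by
      have h12 := (absDiffCM f g).norm_coe_le_norm t
      rw [Real.norm_eq_abs] at h12
      have h13 : absDiffCM f g t = ‖f t‖ - ‖g t‖ := by
        simp [absDiffCM]
      rw [hD]
      rwa [h13] at h12
    rw [h9, h10, ← mul_sub, abs_mul, abs_of_pos (inv_pos.mpr hd0)]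
    calc d⁻¹ * |‖f t‖ - ‖g t‖| ≤ d⁻¹ * D :=
          mul_le_mul_of_nonneg_left h11 (by positivity)
    _ ≤ δ/2 := by
        rw [inv_mul_le_iff₀ hd0]
        linarith
  -- normalized pair
  obtain ⟨α, hα⟩ : ∃ α : ℝ, α = ‖F + G‖ := ⟨_, rfl⟩
  have hα1 : 1 ≤ α := by
    have h14 : F + G = F - (-1 : ℂ) • G := by rw [neg_smul, one_smul, sub_neg_eq_add]
    rw [hα, h14]
    exact hsepFG (-1) (by rw [norm_neg, norm_one])
  have hα0 : 0 < α := lt_of_lt_of_le one_pos hα1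
  obtain ⟨u, hu⟩ : ∃ u : C(K, ℂ), u = ((α:ℂ))⁻¹ • (F + G) := ⟨_, rfl⟩
  obtain ⟨v, hv⟩ : ∃ v : C(K, ℂ), v = F - G := ⟨_, rfl⟩
  have huE : u ∈ E := by rw [hu]; exact E.smul_mem _ (E.add_mem hFE hGE)
  have hvE : v ∈ E := by rw [hv]; exact E.sub_mem hFE hGE
  have hαinv : ‖((α:ℂ))⁻¹‖ = α⁻¹ := by
    rw [norm_inv, Complex.norm_real, Real.norm_eq_abs, abs_of_pos hα0]
  have hu1 : ‖u‖ = 1 := by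
    rw [hu, norm_smul, hαinv, ← hα, inv_mul_cancel₀ hα0.ne']
  have hv1 : ‖v‖ = 1 := by rw [hv]; exact hFG1
  have hFnorm : ‖F‖ ≤ (α + 1)/2 := by
    have h15 : F + F = (F + G) + (F - G) := by abel
    have h16 : ‖F + F‖ = 2 * ‖F‖ := by
      have : F + F = (2:ℂ) • F := by ext t; simp [ContinuousMap.smul_apply]; ring
      rw [this, norm_smul]
      simp
    have h17 : ‖F + F‖ ≤ α + 1 := by
      rw [h15]
      calc ‖(F + G) + (F - G)‖ ≤ ‖F + G‖ + ‖F - G‖ := norm_add_le _ _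
      _ = α + 1 := by rw [← hα, hFG1]
    linarith
  have hGnorm : ‖G‖ ≤ (α + 1)/2 + δ/2 := by
    rw [ContinuousMap.norm_le _ (by positivity)]
    intro t
    have h18 := hptFG t
    have h19 := F.norm_coe_le_norm t
    rw [abs_le] at h18
    linarith
  -- almost perpendicular
  have hperp : ∀ t, |(u t * (starRingEnd ℂ) (v t)).re| ≤ 3*δ := by
    intro t
    have h20 : u t * (starRingEnd ℂ) (v t)
        = ((α⁻¹:ℝ):ℂ) * ((F t + G t) * (starRingEnd ℂ) (F t - G t)) := by
      rw [hu, hv]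
      simp only [ContinuousMap.smul_apply, ContinuousMap.add_apply, ContinuousMap.sub_apply,
        smul_eq_mul, Complex.ofReal_inv]
      ring
    have h21 : (u t * (starRingEnd ℂ) (v t)).re
        = α⁻¹ * (‖F t‖^2 - ‖G t‖^2) := by
      rw [h20, Complex.re_ofReal_mul, re_add_mul_conj_sub]
    rw [h21, abs_mul, abs_of_pos (inv_pos.mpr hα0)]
    set P := ‖F t‖
    set Q := ‖G t‖
    have hP0 : 0 ≤ P := norm_nonneg _
    have hQ0 : 0 ≤ Q := norm_nonneg _
    have hPF : P ≤ (α + 1)/2 := le_trans (F.norm_coe_le_norm t) hFnorm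
    have hQG : Q ≤ (α + 1)/2 + δ/2 := le_trans (G.norm_coe_le_norm t) hGnorm
    have h22 : |P^2 - Q^2| = |P - Q| * (P + Q) := by
      rw [← abs_of_nonneg (by positivity : (0:ℝ) ≤ P + Q), ← abs_mul]
      ring_nf
    have h23 : |P - Q| ≤ δ/2 := hptFG t
    have hPQ : P + Q ≤ 3*α := by linarith
    have h24 : |P^2 - Q^2| ≤ (δ/2) * (3*α) := by
      rw [h22]
      exact mul_le_mul h23 hPQ (by positivity) (by positivity)
    calc α⁻¹ * |P^2 - Q^2| ≤ α⁻¹ * ((δ/2) * (3*α)) :=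
          mul_le_mul_of_nonneg_left h24 (by positivity)
    _ = (3/2) * δ * (α⁻¹ * α) := by ring
    _ = (3/2) * δ := by rw [inv_mul_cancel₀ hα0.ne', mul_one]
    _ ≤ 3*δ := by linarith
  have hsqrt : ‖sqrtReMulConjCM u v‖ < ε := by
    rw [ContinuousMap.norm_lt_iff _ hε]
    intro t
    rw [Real.norm_eq_abs, abs_of_nonneg (by exact Real.sqrt_nonneg _)]
    show Real.sqrt |(u t * (starRingEnd ℂ) (v t)).re| < ε
    refine lt_of_le_of_lt (Real.sqrt_le_sqrt (hperp t)) ?_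
    rw [Real.sqrt_lt' hε]
    nlinarith
  -- separation
  have hsep : ∀ c : ℂ, ‖c‖ = 1 → m ≤ ‖u - c • v‖ := by
    intro c hc
    have hc2 : c.re^2 + c.im^2 = 1 := by
      have h30 : ‖c‖^2 = 1 := by rw [hc]; norm_num
      rwa [Complex.sq_norm, Complex.normSq_apply, ← sq, ← sq] at h30
    by_cases hcase : ρ ≤ |c.re|
    · -- case 1 : real part of c is large
      have hKne : Nonempty K := by
        by_contra hK
        rw [not_nonempty_iff] at hK
        have h31 : u = 0 := by ext t; exact absurd (Nonempty.intro t) (by simpa using hK)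
        rw [h31, norm_zero] at hu1; norm_num at hu1
      obtain ⟨t0, ht0⟩ := cm_exists_norm_eq u
      have h32 : m ≤ ‖u t0 - c * v t0‖ := by
        refine case1_complex (u t0) (v t0) c m ρ δ hm0 (by rw [ht0, hu1])
          (le_trans (v.norm_coe_le_norm t0) hv1.le) (hperp t0) hc hcase hρ0.le ?_
        linarith
      calc m ≤ ‖u t0 - c * v t0‖ := h32
      _ = ‖(u - c • v) t0‖ := by
          simp [ContinuousMap.sub_apply, ContinuousMap.smul_apply, smul_eq_mul]
      _ ≤ ‖u - c • v‖ := (u - c • v).norm_coe_le_norm t0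
    · -- case 2 : real part of c is small
      push_neg at hcase
      obtain ⟨s, hsdef⟩ : ∃ s : ℝ, s = α⁻¹ := ⟨_, rfl⟩
      have hs0 : 0 < s := hsdef ▸ inv_pos.mpr hα0
      have hs1 : s ≤ 1 := by
        rw [hsdef]
        exact inv_le_one_of_one_le₀ hα1
      have hsα : s * α = 1 := by rw [hsdef]; exact inv_mul_cancel₀ hα0.ne'
      obtain ⟨A, hA⟩ : ∃ A : ℝ, A = ‖(s:ℂ) - c‖ := ⟨_, rfl⟩
      obtain ⟨A', hA'⟩ : ∃ A' : ℝ, A' = ‖(s:ℂ) + c‖ := ⟨_, rfl⟩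
      have hA2 : A^2 = (s - c.re)^2 + c.im^2 := by rw [hA]; exact normsq_ofReal_sub s c
      have hA'2 : A'^2 = (s + c.re)^2 + c.im^2 := by rw [hA']; exact normsq_ofReal_add s c
      have hAlb : 1 + s^2 - 2*s*ρ ≤ A^2 := helper_Alb s c.re c.im A ρ hA2 hc2 hcase.le hs0.le
      have hA0 : 0 < A :=
        helper_Apos s A ρ hAlb hρhalf hρ0.le hs0.le (hA ▸ norm_nonneg _)
      have hAub : A ≤ 2 := by
        rw [hA]
        calc ‖(s:ℂ) - c‖ ≤ ‖(s:ℂ)‖ + ‖c‖ := norm_sub_le _ _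
        _ ≤ 2 := by
            rw [hc, Complex.norm_real, Real.norm_eq_abs, abs_of_pos hs0]
            linarith
      have hscne : (s:ℂ) - c ≠ 0 := by
        intro h
        rw [hA, h, norm_zero] at hA0
        exact lt_irrefl 0 hA0
      obtain ⟨γ, hγ⟩ : ∃ γ : ℂ, γ = -(((s:ℂ) + c)/((s:ℂ) - c)) := ⟨_, rfl⟩
      have hu' : u = ((s:ℂ)) • (F + G) := by
        rw [hu, hsdef]
        congr 1
        push_cast
        rfl
      have hufact : u - c • v = ((s:ℂ) - c) • F + ((s:ℂ) + c) • G := by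
        rw [hu', hv]
        ext t
        simp only [ContinuousMap.sub_apply, ContinuousMap.smul_apply, ContinuousMap.add_apply,
          smul_eq_mul]
        ring
      have hfact2 : ((s:ℂ) - c) • (F - γ • G) = ((s:ℂ) - c) • F + ((s:ℂ) + c) • G := by
        ext t
        simp only [ContinuousMap.sub_apply, ContinuousMap.smul_apply, ContinuousMap.add_apply,
          smul_eq_mul, hγ]
        field_simp
        ring
      have hnormeq : ‖u - c • v‖ = A * ‖F - γ • G‖ := by
        rw [hufact, ← hfact2, norm_smul, ← hA]
      have hγA : ‖γ‖ = A'/A := by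
        rw [hγ, norm_neg, norm_div, ← hA, ← hA']
      have hdiffsq : A'^2 - A^2 = 4*s*c.re := by rw [hA2, hA'2]; ring
      have hBle : A^2 * |‖γ‖ - 1| ≤ 4*s*|c.re| := by
        refine helper_B A A' _ s c.re hA0 ?_ hdiffsq (hA' ▸ norm_nonneg _) hs0.le
        rw [hγA]
      obtain ⟨ch, hch1, hch2⟩ := exists_unimodular γ
      have hN1 : 1 ≤ ‖F - γ • G‖ + |‖γ‖ - 1| * ‖G‖ := by
        have j1 : F - ch • G = (F - γ • G) + (γ - ch) • G := by
          ext t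
          simp only [ContinuousMap.sub_apply, ContinuousMap.smul_apply, ContinuousMap.add_apply,
            smul_eq_mul]
          ring
        calc (1:ℝ) ≤ ‖F - ch • G‖ := hsepFG ch hch1
        _ ≤ ‖F - γ • G‖ + ‖(γ - ch) • G‖ := by rw [j1]; exact norm_add_le _ _
        _ = ‖F - γ • G‖ + |‖γ‖ - 1| * ‖G‖ := by rw [norm_smul, hch2]
      have hN1' : A^2 ≤ A^2 * ‖F - γ • G‖ + (4*s*|c.re|) * ‖G‖ :=
        helper_N1 (A^2) _ _ _ _ hN1 (by positivity) hBle (norm_nonneg _)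
      have hcore : m ≤ A * ‖F - γ • G‖ :=
        case2_core A (‖F - γ • G‖) (‖G‖) s (|c.re|) α m ρ qb δ hqbeq hδq hδ0 hm0
          hAlb hAub hA0 hs0 hs1 hcase.le (abs_nonneg _) (by linarith) hα1 hsα
          hGnorm (norm_nonneg _) (norm_nonneg _) hN1'
      rw [hnormeq]
      exact hcore
  exact ⟨u, huE, v, hvE, hu1, hv1, hsep, hsqrt⟩

/-- Characterization of complex stable phase retrieval: a complex subspace `E` of
`C(K; ℂ)` fails stable phase retrieval iff it contains uniformly separated
normalized `ε`-almost perpendicular pairs for every `ε > 0`. -/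
theorem fails_complex_SPR_tfae
    (K : Type*) [TopologicalSpace K] [CompactSpace K] [T2Space K]
    (E : Submodule ℂ C(K, ℂ)) :
    List.TFAE
      [ ∀ C : ℝ, 1 ≤ C → ∃ f ∈ E, ∃ g ∈ E,
          C * ‖absDiffCM f g‖ < ⨅ c : Metric.sphere (0 : ℂ) 1, ‖f - (c : ℂ) • g‖,
        ∀ m : ℝ, 0 < m → m < 1 / Real.sqrt 2 - 1 / 2 → ∀ ε > (0 : ℝ),
          ∃ u ∈ E, ∃ v ∈ E, ‖u‖ = 1 ∧ ‖v‖ = 1 ∧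
            (∀ c : ℂ, ‖c‖ = 1 → m ≤ ‖u - c • v‖) ∧ ‖sqrtReMulConjCM u v‖ < ε,
        ∃ m : ℝ, 0 < m ∧ ∀ ε > (0 : ℝ),
          ∃ u ∈ E, ∃ v ∈ E, ‖u‖ = 1 ∧ ‖v‖ = 1 ∧
            (∀ c : ℂ, ‖c‖ = 1 → m ≤ ‖u - c • v‖) ∧ ‖sqrtReMulConjCM u v‖ < ε ] := by
  have hρpos : 0 < 1 / Real.sqrt 2 - 1 / 2 := by
    have hr0 : (0:ℝ) < Real.sqrt 2 := Real.sqrt_pos.mpr (by norm_num)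
    have hr2 : Real.sqrt 2 ^ 2 = 2 := Real.sq_sqrt (by norm_num)
    have hrlt2 : Real.sqrt 2 < 2 := by nlinarith
    rw [sub_pos, div_lt_div_iff₀ (by norm_num : (0:ℝ) < 2) hr0]
    linarith
  tfae_have 1 → 2 := dir12 E
  tfae_have 2 → 3 := by
    intro h2
    refine ⟨(1 / Real.sqrt 2 - 1 / 2)/2, by linarith, ?_⟩
    exact h2 _ (by linarith) (by linarith)
  tfae_have 3 → 1 := by
    intro h3
    obtain ⟨m, hm, H⟩ := h3
    intro C hC
    have hC0 : (0:ℝ) < C := lt_of_lt_of_le one_pos hC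
    obtain ⟨u, huE, v, hvE, hu, hv, hsep, hperp⟩ := H (m / (4 * C)) (by positivity)
    refine ⟨u + v, E.add_mem huE hvE, u - v, E.sub_mem huE hvE, ?_⟩
    have h1 : C * ‖absDiffCM (u + v) (u - v)‖ < m / 2 := by
      calc C * ‖absDiffCM (u + v) (u - v)‖ ≤ C * (2 * ‖sqrtReMulConjCM u v‖) := by
            have := absdiff_le u v
            nlinarith [norm_nonneg (absDiffCM (u + v) (u - v))]
      _ < C * (2 * (m / (4 * C))) := by
            have h2 : (0:ℝ) < 2 * C := by linarith
            nlinarith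
      _ = m / 2 := by field_simp; ring
    refine h1.trans_le (le_ciInf fun cc => ?_)
    have hcc : ‖(cc : ℂ)‖ = 1 := by
      have := cc.2
      rwa [Metric.mem_sphere, dist_zero_right] at this
    exact sep_scaled hm hu hv hsep (cc : ℂ) hcc
  tfae_finish
end

section
/- Let X be a normed vector space over ℂ, let u, v ∈ X with ‖u‖ = ‖v‖ = 1, and let m > 0 be such that ‖u − λv‖ ≥ m for every λ ∈ ℂ with |λ| = 1. Set δ = (1 + (1 + m/2)²)^{−1/2}. Then for all α, β ∈ ℂ with |α|² + |β|² = 1, one has ‖αu + βv‖ ≥ δm/2. -/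
lemma key_half (X : Type*) [NormedAddCommGroup X] [NormedSpace ℂ X]
    (u v : X) (hu : ‖u‖ = 1) (hv : ‖v‖ = 1) (m : ℝ) (hm : 0 < m)
    (hsep : ∀ c : ℂ, ‖c‖ = 1 → m ≤ ‖u - c • v‖)
    (α β : ℂ) (hαβ : ‖α‖ ^ 2 + ‖β‖ ^ 2 = 1) (hba : ‖β‖ ≤ ‖α‖) :
    m / (2 * Real.sqrt 2) ≤ ‖α • u + β • v‖ := by
  have hm2 : m ≤ 2 := by
    have h := hsep 1 (by simp)
    have h2 : ‖u - (1:ℂ) • v‖ ≤ 2 := by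
      rw [one_smul]
      calc ‖u - v‖ ≤ ‖u‖ + ‖v‖ := norm_sub_le _ _
        _ = 2 := by rw [hu, hv]; norm_num
    linarith
  have hs2 : (0:ℝ) < Real.sqrt 2 := by positivity
  have hsq2 : Real.sqrt 2 ^ 2 = 2 := Real.sq_sqrt (by norm_num)
  set a := ‖α‖ with ha_def
  set b := ‖β‖ with hb_def
  have hb0 : 0 ≤ b := norm_nonneg β
  have ha2 : 1 ≤ 2 * a ^ 2 := by nlinarith
  have ha' : 1 ≤ Real.sqrt 2 * a := by nlinarith [norm_nonneg α]
  have ha0 : 0 < a := by nlinarith [norm_nonneg α]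
  by_cases hβ : β = 0
  · have hb : b = 0 := by simp [hb_def, hβ]
    have ha1 : a = 1 := by nlinarith [norm_nonneg α]
    have hN : ‖α • u + β • v‖ = 1 := by
      rw [hβ, zero_smul, add_zero, norm_smul, hu, mul_one, ← ha_def, ha1]
    rw [hN, div_le_one (by positivity)]
    nlinarith
  · have hα : α ≠ 0 := by
      intro h; apply hβ
      have : a = 0 := by simp [ha_def, h]
      have : b = 0 := le_antisymm (by linarith) hb0
      exact norm_eq_zero.mp this
    have hb0' : 0 < b := by
      simpa [hb_def] using norm_pos_iff.mpr hβ
    set c : ℂ := -(β / α) * ((a : ℂ) / (b : ℂ)) with hc_def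
    have hc : ‖c‖ = 1 := by
      rw [hc_def, norm_mul, norm_neg, norm_div, norm_div,
        Complex.norm_real, Complex.norm_real, ← ha_def, ← hb_def,
        Real.norm_of_nonneg ha0.le, Real.norm_of_nonneg hb0]
      field_simp
    have h1 : m ≤ ‖u - c • v‖ := hsep c hc
    have hsplit : u + (β / α) • v = (u - c • v) + (c + β / α) • v := by
      rw [add_smul]; abel
    have hnorm_cb : ‖c + β / α‖ = (a - b) / a := by
      have : c + β / α = (β / α) * (1 - (a : ℂ) / (b : ℂ)) := by
        rw [hc_def]; ring
      rw [this, norm_mul, norm_div, ← ha_def, ← hb_def]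
      have h1' : ‖1 - (a : ℂ) / (b : ℂ)‖ = (a - b) / b := by
        have hbne : (b : ℂ) ≠ 0 := by exact_mod_cast hb0'.ne'
        have : (1 : ℂ) - (a : ℂ) / (b : ℂ) = (((b - a) / b : ℝ) : ℂ) := by
          push_cast
          rw [sub_div, div_self hbne]
        rw [this, Complex.norm_real, Real.norm_eq_abs, abs_div,
          abs_of_nonpos (by linarith), abs_of_pos hb0']
        ring
      rw [h1']
      field_simp
    have h2 : m - (a - b) / a ≤ ‖u + (β / α) • v‖ := by
      have hsplit2 : u - c • v = (u + (β / α) • v) - (c + β / α) • v := by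
        rw [add_smul]; abel
      have := norm_sub_le (u + (β / α) • v) ((c + β / α) • v)
      rw [← hsplit2, norm_smul, hnorm_cb, hv, mul_one] at this
      linarith
    have h3 : ‖α • u + β • v‖ = a * ‖u + (β / α) • v‖ := by
      have : α • (u + (β / α) • v) = α • u + β • v := by
        rw [smul_add, smul_smul, mul_div_cancel₀ _ hα]
      rw [← this, norm_smul, ← ha_def]
    have h4 : a * m - (a - b) ≤ ‖α • u + β • v‖ := by
      rw [h3]
      have := mul_le_mul_of_nonneg_left h2 ha0.le
      calc a * m - (a - b) = a * (m - (a - b) / a) := by field_simp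
        _ ≤ a * ‖u + (β / α) • v‖ := this
    have h5 : a - b ≤ ‖α • u + β • v‖ := by
      have : ‖α • u‖ - ‖β • v‖ ≤ ‖α • u + β • v‖ := by
        have := norm_sub_norm_le (α • u) (-(β • v))
        simpa [sub_neg_eq_add] using this
      rw [norm_smul, norm_smul, hu, hv, mul_one, mul_one] at this
      exact this
    rw [div_le_iff₀ (by positivity)]
    nlinarith [norm_nonneg (α • u + β • v)]

/-- If `u, v` are norm-one vectors in a complex normed space that are `m`-separated
in the projective sense (`‖u - λv‖ ≥ m` for all unimodular `λ`), then with
`δ = (1 + (1 + m/2)²)^{-1/2}` one has `‖αu + βv‖ ≥ δm/2` whenever `|α|² + |β|² = 1`. -/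
theorem norm_smul_add_smul_ge
    (X : Type*) [NormedAddCommGroup X] [NormedSpace ℂ X]
    (u v : X) (hu : ‖u‖ = 1) (hv : ‖v‖ = 1) (m : ℝ) (hm : 0 < m)
    (hsep : ∀ c : ℂ, ‖c‖ = 1 → m ≤ ‖u - c • v‖)
    (α β : ℂ) (hαβ : ‖α‖ ^ 2 + ‖β‖ ^ 2 = 1) :
    (Real.sqrt (1 + (1 + m / 2) ^ 2))⁻¹ * m / 2 ≤ ‖α • u + β • v‖ := by
  have hδ : (Real.sqrt (1 + (1 + m / 2) ^ 2))⁻¹ * m / 2 ≤ m / (2 * Real.sqrt 2) := by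
    have hle : Real.sqrt 2 ≤ Real.sqrt (1 + (1 + m / 2) ^ 2) := by
      apply Real.sqrt_le_sqrt
      nlinarith
    have hs2 : (0:ℝ) < Real.sqrt 2 := by positivity
    have hinv : (Real.sqrt 2)⁻¹ * Real.sqrt 2 = 1 := inv_mul_cancel₀ hs2.ne'
    have : m / (2 * Real.sqrt 2) = (Real.sqrt 2)⁻¹ * m / 2 := by
      rw [div_eq_div_iff (by positivity) (by norm_num : (2:ℝ) ≠ 0)]
      linear_combination (-2 * m) * hinv
    rw [this]
    gcongr
  refine le_trans hδ ?_
  rcases le_total ‖β‖ ‖α‖ with h | h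
  · exact key_half X u v hu hv m hm hsep α β hαβ h
  · have hsep' : ∀ c : ℂ, ‖c‖ = 1 → m ≤ ‖v - c • u‖ := by
      intro c hc
      have hc0 : c ≠ 0 := by intro h; rw [h] at hc; simp at hc
      have hci : ‖c⁻¹‖ = 1 := by rw [norm_inv, hc]; norm_num
      have h1 := hsep c⁻¹ hci
      calc m ≤ ‖u - c⁻¹ • v‖ := h1
        _ = ‖c • (u - c⁻¹ • v)‖ := by rw [norm_smul, hc, one_mul]
        _ = ‖c • u - v‖ := by
            rw [smul_sub, smul_smul, mul_inv_cancel₀ hc0, one_smul]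
        _ = ‖v - c • u‖ := norm_sub_rev _ _
    have := key_half X v u hv hu m hm hsep' β α (by linarith) h
    rwa [add_comm] at this
end

section
/- Let u = (1,1,1,0) and w = (1,i,0,1) in ℂ⁴ and let E = span_ℂ{u, w}. Then E does phase retrieval in ℓ∞⁴(ℂ): for all f, g ∈ E with |f_j| = |g_j| for every j ∈ {1,2,3,4}, there exists λ ∈ ℂ with |λ| = 1 and f = λ·g. -/
/-- The span of `u = (1,1,1,0)` and `w = (1,i,0,1)` in `ℂ⁴` does phase retrieval. -/
theorem span_does_phase_retrieval
    (f g : Fin 4 → ℂ)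
    (hf : f ∈ Submodule.span ℂ ({![1, 1, 1, 0], ![1, Complex.I, 0, 1]} : Set (Fin 4 → ℂ)))
    (hg : g ∈ Submodule.span ℂ ({![1, 1, 1, 0], ![1, Complex.I, 0, 1]} : Set (Fin 4 → ℂ)))
    (h : ∀ j, ‖f j‖ = ‖g j‖) :
    ∃ c : ℂ, ‖c‖ = 1 ∧ f = c • g := by
  obtain ⟨a, b, hab⟩ := Submodule.mem_span_pair.mp hf
  obtain ⟨c, d, hcd⟩ := Submodule.mem_span_pair.mp hg
  have hf0 : f 0 = a + b := by rw [← hab]; simp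
  have hf1 : f 1 = a + b * Complex.I := by rw [← hab]; simp
  have hf2 : f 2 = a := by rw [← hab]; simp
  have hf3 : f 3 = b := by rw [← hab]; simp
  have hg0 : g 0 = c + d := by rw [← hcd]; simp
  have hg1 : g 1 = c + d * Complex.I := by rw [← hcd]; simp
  have hg2 : g 2 = c := by rw [← hcd]; simp
  have hg3 : g 3 = d := by rw [← hcd]; simp
  have keyR : ∀ z w : ℂ, ‖z‖ = ‖w‖ →
      z.re * z.re + z.im * z.im = w.re * w.re + w.im * w.im := by
    intro z w hzw
    have := congrArg (fun t => t ^ 2) hzw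
    simpa [Complex.sq_norm, Complex.normSq_apply] using this
  have h0 := h 0; rw [hf0, hg0] at h0
  have h1 := h 1; rw [hf1, hg1] at h1
  have h2 := h 2; rw [hf2, hg2] at h2
  have h3 := h 3; rw [hf3, hg3] at h3
  have r0 := keyR _ _ h0
  have r1 := keyR _ _ h1
  have r2 := keyR _ _ h2
  have r3 := keyR _ _ h3
  simp only [Complex.add_re, Complex.add_im, Complex.mul_re, Complex.mul_im,
    Complex.I_re, Complex.I_im, mul_zero, mul_one, zero_mul, sub_zero, add_zero,
    zero_add] at r0 r1
  -- key identity : a * conj b = c * conj d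
  have habcd : a * (starRingEnd ℂ) b = c * (starRingEnd ℂ) d := by
    apply Complex.ext
    · simp only [Complex.mul_re, Complex.conj_re, Complex.conj_im, mul_neg, sub_neg_eq_add]
      linarith
    · simp only [Complex.mul_im, Complex.conj_re, Complex.conj_im, mul_neg, neg_mul]
      linarith
  by_cases hc : c = 0
  · have ha : a = 0 := by
      have : ‖a‖ = 0 := by rw [h2, hc, norm_zero]
      exact norm_eq_zero.mp this
    by_cases hd : d = 0
    · have hb : b = 0 := by
        have : ‖b‖ = 0 := by rw [h3, hd, norm_zero]
        exact norm_eq_zero.mp this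
      refine ⟨1, by simp, ?_⟩
      rw [← hab, ← hcd, ha, hb, hc, hd]
      simp
    · refine ⟨b / d, ?_, ?_⟩
      · rw [norm_div, h3]
        exact div_self (norm_ne_zero_iff.mpr hd)
      · rw [← hab, ← hcd, ha, hc]
        simp only [zero_smul, zero_add, smul_smul, div_mul_cancel₀ _ hd]
  · have ha : a ≠ 0 := by
      intro h'
      apply hc
      have : ‖c‖ = 0 := by rw [← h2, h', norm_zero]
      exact norm_eq_zero.mp this
    have haa : a * (starRingEnd ℂ) a = c * (starRingEnd ℂ) c := by
      rw [Complex.mul_conj, Complex.mul_conj, Complex.normSq_eq_norm_sq, Complex.normSq_eq_norm_sq, h2]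
    have hca : (starRingEnd ℂ) a ≠ 0 := by
      simpa using ha
    have hbc : b * c = a * d := by
      have key : (b * c - a * d) * (starRingEnd ℂ) a = 0 := by
        have h1' : (starRingEnd ℂ) a * b = (starRingEnd ℂ) c * d := by
          have := congrArg (starRingEnd ℂ) habcd
          simpa [map_mul, mul_comm] using this
        linear_combination c * h1' - d * haa
      exact sub_eq_zero.mp ((mul_eq_zero.mp key).resolve_right hca)
    refine ⟨a / c, ?_, ?_⟩
    · rw [norm_div, h2]
      exact div_self (norm_ne_zero_iff.mpr hc)
    · have hb : b = a / c * d := by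
        field_simp
        linear_combination hbc
      rw [← hab, ← hcd]
      rw [smul_add, smul_smul, smul_smul, div_mul_cancel₀ _ hc, hb]
end

section
/- Let K be a compact Hausdorff topological space and let E be a complex linear subspace of C(K; ℂ). If E contains two real-valued functions f, g (i.e., f(t), g(t) ∈ ℝ for all t ∈ K) that are linearly independent over ℝ, then E fails phase retrieval: the functions f + ig and f − ig belong to E, satisfy |f + ig| = |f − ig| pointwise, and f + ig ≠ λ(f − ig) for every λ ∈ ℂ with |λ| = 1. -/
/-- If a complex subspace `E` of `C(K; ℂ)` contains two real-valued functions `f, g`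
that are linearly independent over `ℝ`, then `E` fails phase retrieval: `f + ig` and
`f - ig` belong to `E`, have equal pointwise moduli, and are not unimodular
multiples of each other. -/
theorem real_pair_fails_complex_phase_retrieval
    (K : Type*) [TopologicalSpace K] [CompactSpace K] [T2Space K]
    (E : Submodule ℂ C(K, ℂ)) (f g : C(K, ℂ)) (hf : f ∈ E) (hg : g ∈ E)
    (hfr : ∀ t, (f t).im = 0) (hgr : ∀ t, (g t).im = 0)
    (hind : LinearIndependent ℝ ![f, g]) :
    f + Complex.I • g ∈ E ∧ f - Complex.I • g ∈ E ∧
    (∀ t, ‖(f + Complex.I • g) t‖ = ‖(f - Complex.I • g) t‖) ∧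
    ∀ c : ℂ, ‖c‖ = 1 → f + Complex.I • g ≠ c • (f - Complex.I • g) := by
  refine ⟨E.add_mem hf (E.smul_mem _ hg), E.sub_mem hf (E.smul_mem _ hg), ?_, ?_⟩
  · intro t
    simp only [ContinuousMap.add_apply, ContinuousMap.sub_apply,
      ContinuousMap.smul_apply, smul_eq_mul]
    rw [← Complex.norm_conj (f t - Complex.I * g t)]
    congr 1
    simp [Complex.ext_iff, hfr t, hgr t]
  · intro c hc h
    have key : ∀ t, f t + Complex.I * g t = c * (f t - Complex.I * g t) := by
      intro t
      have := ContinuousMap.congr_fun h t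
      simpa using this
    -- real and imaginary parts
    have hre : (1 - c.re) • f - c.im • g = 0 := by
      ext t
      have := congrArg Complex.re (key t)
      simp [Complex.add_re, Complex.mul_re, hfr t, hgr t, Complex.ext_iff] at this ⊢
      ring_nf
      ring_nf at this
      linarith
    have him : (-c.im) • f + (1 + c.re) • g = 0 := by
      ext t
      have := congrArg Complex.im (key t)
      simp [Complex.add_im, Complex.mul_im, hfr t, hgr t, Complex.ext_iff] at this ⊢
      ring_nf
      ring_nf at this
      linarith
    rw [LinearIndependent.pair_iff] at hind
    have h1 := hind (1 - c.re) (-c.im) (by simpa [sub_eq_add_neg, sub_smul, neg_smul] using hre)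
    have h2 := hind (-c.im) (1 + c.re) him
    have : c.re = 1 := by linarith [h1.1]
    linarith [h2.2]
end
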